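/- arXiv:0708.1109 — 7 statements merged into one kernel-verified Lean document; each statement's English description precedes it below -/
import Mathlib

section
/- Let p, q, r be pairwise distinct indices and let u, v, w be complex variables with u = v + 1 or u = v - 1 (so f_{pq}(u,v) = 1 ∓ (p q)). Then the product f_{pq}(u,v)·f_{pr}(u,w)·f_{qr}(v,w), viewed as a rational function of w with u, v fixed, extends to a function regular (has a removable singularity) at w = u; indeed under u = v ± 1 it equals (1 ∓ (p q))·(1 - ((p r) + (q r))/(v - w)), which is regular at w = v ± 1. -/
/-- The rational function `f_{pq}(u,v) = 1 - (p q)/(u-v)` with values in the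
group algebra `ℂ[S_n]`, where `(p q)` is the transposition of `p` and `q`. -/
noncomputable def fusionF (n : ℕ) (p q : Fin n) (u v : ℂ) :
    MonoidAlgebra ℂ (Equiv.Perm (Fin n)) :=
  1 - (u - v)⁻¹ • MonoidAlgebra.of ℂ (Equiv.Perm (Fin n)) (Equiv.swap p q)

/-- Key noncommutative-ring identity: if `S² = 1`, `TK = ST` and the scalars
satisfy `c - b = ε b c` with `ε = ±1`, then
`(1 - εS)(1 - bT)(1 - cK) = (1 - εS)(1 - c(T + K))`. -/
lemma key_ring {A : Type*} [Ring A] [Algebra ℂ A] (S T K : A) (ε b c : ℂ)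
    (hS : S * S = 1) (hTK : T * K = S * T)
    (hc : c - b = ε * (b * c)) (hε : ε = 1 ∨ ε = -1) :
    (1 - ε • S) * (1 - b • T) * (1 - c • K)
      = (1 - ε • S) * (1 - c • (T + K)) := by
  have hSTK : S * (T * K) = T := by rw [hTK, ← mul_assoc, hS, one_mul]
  simp only [mul_sub, sub_mul, mul_one, one_mul, smul_mul_assoc, mul_smul_comm,
    smul_smul, smul_add, mul_add]
  rw [mul_assoc S T K, hSTK, hTK]
  rcases hε with h | h <;> subst h <;> match_scalars <;>
    first
      | ring1
      | linear_combination hc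
      | linear_combination -hc
      | linear_combination 2 * hc
      | linear_combination (-2) * hc

/-- `(p r)(q r) = (p q)(p r)` for pairwise distinct `p, q, r`. -/
lemma swap_rel {n : ℕ} (p q r : Fin n) (hpq : p ≠ q) (hpr : p ≠ r) (hqr : q ≠ r) :
    Equiv.swap p r * Equiv.swap q r = Equiv.swap p q * Equiv.swap p r := by
  ext x
  simp only [Equiv.Perm.mul_apply, Equiv.swap_apply_def]
  split_ifs <;> simp_all

/-- Under the condition `u = v ± 1` (so that `f_{pq}(u,v) = 1 ∓ (p q)`), the triple
product `f_{pq}(u,v)·f_{pr}(u,w)·f_{qr}(v,w)` equals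
`(1 ∓ (p q))·(1 - ((p r) + (q r))/(v - w))`, which as a rational function of `w`
is regular at `w = u` (the singularity there is removable). -/
theorem triple_regular (n : ℕ) (p q r : Fin n)
    (hpq : p ≠ q) (hpr : p ≠ r) (hqr : q ≠ r)
    (ε u v w : ℂ) (hε : ε = 1 ∨ ε = -1) (hu : u = v + ε)
    (hwu : w ≠ u) (hwv : w ≠ v) :
    fusionF n p q u v * fusionF n p r u w * fusionF n q r v w
      = (1 - ε • MonoidAlgebra.of ℂ (Equiv.Perm (Fin n)) (Equiv.swap p q)) *
        (1 - (v - w)⁻¹ •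
          (MonoidAlgebra.of ℂ (Equiv.Perm (Fin n)) (Equiv.swap p r) +
           MonoidAlgebra.of ℂ (Equiv.Perm (Fin n)) (Equiv.swap q r))) := by
  set S := MonoidAlgebra.of ℂ (Equiv.Perm (Fin n)) (Equiv.swap p q) with hSdef
  set T := MonoidAlgebra.of ℂ (Equiv.Perm (Fin n)) (Equiv.swap p r) with hTdef
  set K := MonoidAlgebra.of ℂ (Equiv.Perm (Fin n)) (Equiv.swap q r) with hKdef
  have huw : u - w ≠ 0 := sub_ne_zero.mpr (Ne.symm hwu)
  have hvw : v - w ≠ 0 := sub_ne_zero.mpr (Ne.symm hwv)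
  have hεne : ε ≠ 0 := by rcases hε with h | h <;> simp [h]
  have huv : (u - v)⁻¹ = ε := by
    rw [hu]; rcases hε with h | h <;> simp [h, inv_neg]
  have hS2 : S * S = 1 := by
    rw [hSdef, ← map_mul, Equiv.swap_mul_self, map_one]
  have hTK : T * K = S * T := by
    rw [hSdef, hTdef, hKdef, ← map_mul, ← map_mul, swap_rel p q r hpq hpr hqr]
  have hc : (v - w)⁻¹ - (u - w)⁻¹ = ε * ((u - w)⁻¹ * (v - w)⁻¹) := by
    field_simp
    rw [hu]; ring
  unfold fusionF
  rw [huv]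
  exact key_ring S T K ε (u - w)⁻¹ (v - w)⁻¹ hS2 hTK hc hε
end

section
/- For each i = 1, ..., n-1 and nonzero a, b ∈ ℂ(q) with a ≠ b, define F_i(a,b) = T_i + (q - q⁻¹)/(a⁻¹b - 1) in the Hecke algebra H_n. Then the braid-type Yang–Baxter relation holds: F_i(a,b)·F_{i+1}(a,c)·F_i(b,c) = F_{i+1}(b,c)·F_i(a,c)·F_{i+1}(a,b), for pairwise distinct nonzero a, b, c. -/
open RatFunc

/-- The function `F_i(a,b) = T_i + (q - q⁻¹)/(a⁻¹b - 1)` with values in the Hecke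
algebra, for nonzero `a ≠ b` in `ℂ(q)`. -/
noncomputable def heckeF {H : Type*} [Ring H] [Algebra (RatFunc ℂ) H]
    (T : ℕ → H) (i : ℕ) (a b : RatFunc ℂ) : H :=
  T i + algebraMap (RatFunc ℂ) H ((X - X⁻¹) / (a⁻¹ * b - 1))

/-- Abstract Yang–Baxter computation: in any algebra over a commutative ring,
given the quadratic and braid relations, a scalar identity implies the
braid-type Yang–Baxter relation. -/
theorem yb_aux {F H : Type*} [CommRing F] [Ring H] [Algebra F H]
    (u v : H) (δ α β γ : F)
    (hq1 : u*u = δ•u + 1) (hq2 : v*v = δ•v + 1) (hbr : u*v*u = v*u*v)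
    (key : α*γ = β*δ + β*γ + α*β) :
    (u + α•(1:H))*(v + β•(1:H))*(u + γ•(1:H))
      = (v + γ•(1:H))*(u + β•(1:H))*(v + α•(1:H)) := by
  have expand : ∀ (x y z : H) (p r s : F),
      (x + p • (1:H)) * (y + r • (1:H)) * (z + s • (1:H))
      = x * y * z + s • (x * y) + r • (x * z) + p • (y * z)
        + (r * s) • x + (p * s) • y + (p * r) • z + (p * r * s) • (1:H) := by
    intro x y z p r s
    simp only [mul_add, add_mul, smul_mul_assoc, mul_smul_comm, one_mul, mul_one, smul_smul]
    module
  rw [expand, expand, hq1, hq2, hbr]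
  simp only [smul_add, smul_smul]
  match_scalars <;>
    first
      | ring1
      | (linear_combination key)
      | (linear_combination -key)
      | (linear_combination 2*key)
      | (linear_combination (-2)*key)

/-- In the Hecke algebra `H_n` the braid-type Yang–Baxter relation
`F_i(a,b)·F_{i+1}(a,c)·F_i(b,c) = F_{i+1}(b,c)·F_i(a,c)·F_{i+1}(a,b)` holds for
pairwise distinct nonzero `a, b, c ∈ ℂ(q)`. -/
theorem hecke_yang_baxter (n : ℕ) (H : Type*) [Ring H]
    [Algebra (RatFunc ℂ) H] (T : ℕ → H)
    (hquad : ∀ i, 1 ≤ i → i < n →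
      (T i - algebraMap (RatFunc ℂ) H X) * (T i + algebraMap (RatFunc ℂ) H X⁻¹) = 0)
    (hbraid : ∀ i, 1 ≤ i → i + 1 < n →
      T i * T (i + 1) * T i = T (i + 1) * T i * T (i + 1))
    (hcomm : ∀ i j, 1 ≤ i → i < n → j < n → i + 1 < j → T i * T j = T j * T i)
    (i : ℕ) (hi : 1 ≤ i) (hi' : i + 1 < n)
    (a b c : RatFunc ℂ) (ha : a ≠ 0) (hb : b ≠ 0) (hc : c ≠ 0)
    (hab : a ≠ b) (hac : a ≠ c) (hbc : b ≠ c) :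
    heckeF T i a b * heckeF T (i + 1) a c * heckeF T i b c =
      heckeF T (i + 1) b c * heckeF T i a c * heckeF T (i + 1) a b := by
  set A := algebraMap (RatFunc ℂ) H with hA
  set δ : RatFunc ℂ := X - X⁻¹ with hδ
  set α : RatFunc ℂ := δ / (a⁻¹ * b - 1) with hα
  set β : RatFunc ℂ := δ / (a⁻¹ * c - 1) with hβ
  set γ : RatFunc ℂ := δ / (b⁻¹ * c - 1) with hγ
  -- quadratic relations
  have hq : ∀ j, 1 ≤ j → j < n → T j * T j = δ • T j + 1 := by
    intro j hj hj'
    have h := hquad j hj hj'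
    have hXX : A X * A X⁻¹ = 1 := by
      rw [hA, ← map_mul, mul_inv_cancel₀ RatFunc.X_ne_zero, map_one]
    have hcm : T j * A X⁻¹ = A X⁻¹ * T j := (Algebra.commutes _ _).symm
    have h' : (T j - A X) * (T j + A X⁻¹)
        = T j * T j + T j * A X⁻¹ - A X * T j - A X * A X⁻¹ := by noncomm_ring
    rw [h', hXX, hcm] at h
    have h2 : T j * T j = A X * T j - A X⁻¹ * T j + 1 := by
      rw [← sub_eq_zero]
      calc T j * T j - (A X * T j - A X⁻¹ * T j + 1)
          = T j * T j + A X⁻¹ * T j - A X * T j - 1 := by abel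
        _ = 0 := h
    rw [h2, hδ, sub_smul, Algebra.smul_def, Algebra.smul_def, ← hA]
  have hq1 : T i * T i = δ • T i + 1 := hq i hi (by omega)
  have hq2 : T (i+1) * T (i+1) = δ • T (i+1) + 1 := hq (i + 1) (by omega) hi'
  have hbr : T i * T (i+1) * T i = T (i+1) * T i * T (i+1) := hbraid i hi hi'
  -- the key scalar identity
  have hba : b - a ≠ 0 := sub_ne_zero.mpr (Ne.symm hab)
  have hca : c - a ≠ 0 := sub_ne_zero.mpr (Ne.symm hac)
  have hcb : c - b ≠ 0 := sub_ne_zero.mpr (Ne.symm hbc)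
  have e1 : a⁻¹*b - 1 = (b-a)/a := by field_simp
  have e2 : a⁻¹*c - 1 = (c-a)/a := by field_simp
  have e3 : b⁻¹*c - 1 = (c-b)/b := by field_simp
  have key : α*γ = β*δ + β*γ + α*β := by
    rw [hα, hβ, hγ, e1, e2, e3, div_div_eq_mul_div, div_div_eq_mul_div,
      div_div_eq_mul_div]
    field_simp
    ring
  -- put the goal in `smul` form and conclude
  have hF : ∀ (j : ℕ) (x y : RatFunc ℂ),
      heckeF T j x y = T j + (δ / (x⁻¹ * y - 1)) • (1 : H) := by
    intro j x y
    rw [heckeF, Algebra.algebraMap_eq_smul_one, hδ]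
  rw [hF, hF, hF, hF, hF, hF, ← hα, ← hβ, ← hγ]
  exact yb_aux (T i) (T (i+1)) δ α β γ hq1 hq2 hbr key
end

section
/- In the Hecke algebra H_n, for nonzero a ≠ b in ℂ(q), F_i(a,b)·F_i(b,a) = 1 - (q - q⁻¹)²·ab/(a - b)², where F_i(a,b) = T_i + (q - q⁻¹)/(a⁻¹b - 1). -/
open RatFunc

/-- In the Hecke algebra `H_n`, for nonzero `a ≠ b` in `ℂ(q)`,
`F_i(a,b)·F_i(b,a) = 1 - (q - q⁻¹)²·ab/(a - b)²`. -/
theorem hecke_fusion_inverse (n : ℕ) (H : Type*) [Ring H]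
    [Algebra (RatFunc ℂ) H] (T : ℕ → H)
    (hquad : ∀ i, 1 ≤ i → i < n →
      (T i - algebraMap (RatFunc ℂ) H X) * (T i + algebraMap (RatFunc ℂ) H X⁻¹) = 0)
    (hbraid : ∀ i, 1 ≤ i → i + 1 < n →
      T i * T (i + 1) * T i = T (i + 1) * T i * T (i + 1))
    (hcomm : ∀ i j, 1 ≤ i → i < n → j < n → i + 1 < j → T i * T j = T j * T i)
    (i : ℕ) (hi : 1 ≤ i) (hi' : i < n)
    (a b : RatFunc ℂ) (ha : a ≠ 0) (hb : b ≠ 0) (hab : a ≠ b) :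
    heckeF T i a b * heckeF T i b a =
      1 - algebraMap (RatFunc ℂ) H ((X - X⁻¹) ^ 2 * a * b / (a - b) ^ 2) := by
  have hX : (X : RatFunc ℂ) ≠ 0 := RatFunc.X_ne_zero
  have hab' : a - b ≠ 0 := sub_ne_zero.mpr hab
  have hba' : b - a ≠ 0 := sub_ne_zero.mpr (Ne.symm hab)
  have hd1 : a⁻¹ * b - 1 ≠ 0 := by
    intro h
    have h1 : a⁻¹ * b = 1 := by linear_combination h
    apply hba'
    field_simp at h1
    linear_combination h1
  have hd2 : b⁻¹ * a - 1 ≠ 0 := by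
    intro h
    have h1 : b⁻¹ * a = 1 := by linear_combination h
    apply hab'
    field_simp at h1
    linear_combination h1
  set c : RatFunc ℂ := X - X⁻¹ with hc
  set u : RatFunc ℂ := c / (a⁻¹ * b - 1) with hu
  set v : RatFunc ℂ := c / (b⁻¹ * a - 1) with hv
  -- rewrite u and v with denominator a - b
  have hu' : u = -(c * a) / (a - b) := by
    rw [hu, div_eq_div_iff hd1 hab']
    field_simp
    ring
  have hv' : v = c * b / (a - b) := by
    rw [hv, div_eq_div_iff hd2 hab']
    field_simp
  have hsum : u + v = -c := by
    rw [hu', hv', ← add_div, div_eq_iff hab']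
    ring
  have hprod : u * v = -(c ^ 2 * a * b / (a - b) ^ 2) := by
    rw [hu', hv', div_mul_div_comm, ← neg_div,
      div_eq_div_iff (mul_ne_zero hab' hab') (pow_ne_zero 2 hab')]
    ring
  set φ := algebraMap (RatFunc ℂ) H with hφ
  have hinv : φ X * φ X⁻¹ = 1 := by
    rw [← map_mul, mul_inv_cancel₀ hX, map_one]
  have hcommX : φ X⁻¹ * T i = T i * φ X⁻¹ := Algebra.commutes X⁻¹ (T i)
  -- quadratic relation in the form T i * T i = φ c * T i + 1
  have hq := hquad i hi hi'
  have expand : (T i - φ X) * (T i + φ X⁻¹)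
      = T i * T i + T i * φ X⁻¹ - φ X * T i - φ X * φ X⁻¹ := by noncomm_ring
  rw [expand] at hq
  have hT2 : T i * T i = φ c * T i + 1 := by
    have e2 : φ c * T i + 1 = φ X * T i - T i * φ X⁻¹ + φ X * φ X⁻¹ := by
      rw [hc, map_sub, sub_mul, hinv, hcommX]
    rw [e2]
    apply eq_of_sub_eq_zero
    have e3 : T i * T i - (φ X * T i - T i * φ X⁻¹ + φ X * φ X⁻¹)
        = T i * T i + T i * φ X⁻¹ - φ X * T i - φ X * φ X⁻¹ := by abel
    rw [e3, hq]
  have key : heckeF T i a b * heckeF T i b a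
      = T i * T i + φ (u + v) * T i + φ (u * v) := by
    show (T i + φ u) * (T i + φ v) = _
    have h1 : T i * φ v = φ v * T i := (Algebra.commutes v (T i)).symm
    rw [map_add, map_mul, add_mul, mul_add, mul_add, h1, add_mul]
    abel
  rw [key, hT2, hsum, hprod, map_neg, neg_mul, map_neg]
  abel
end

section
/- Let λ be a partition of n, Λ a standard Young tableau of shape λ, P_Λ the sum of all permutations preserving each row of Λ and Q_Λ the signed sum of all permutations preserving each column of Λ. Then the Young symmetrizer Y_Λ = P_Λ Q_Λ satisfies Y_Λ² = α_Λ · Y_Λ for some positive rational number α_Λ. -/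
/-- The row symmetrizer `P_Λ = Σ_{p ∈ R(Λ)} p` of a Young tableau `Λ`, encoded by
the bijection `e` sending an entry to its cell: the sum of all permutations of the
entries preserving the row of each entry. -/
noncomputable def rowSymmetrizer (n : ℕ) (μ : YoungDiagram)
    (e : Fin n ≃ {c // c ∈ μ.cells}) : MonoidAlgebra ℂ (Equiv.Perm (Fin n)) :=
  ∑ σ ∈ Finset.univ.filter
      (fun σ : Equiv.Perm (Fin n) => ∀ k, ((e (σ k) : ℕ × ℕ)).1 = ((e k : ℕ × ℕ)).1),
    MonoidAlgebra.of ℂ (Equiv.Perm (Fin n)) σ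

/-- The column antisymmetrizer `Q_Λ = Σ_{q ∈ C(Λ)} (sgn q)·q` of a Young tableau
`Λ`: the signed sum of all permutations of the entries preserving the column of
each entry. -/
noncomputable def colSymmetrizer (n : ℕ) (μ : YoungDiagram)
    (e : Fin n ≃ {c // c ∈ μ.cells}) : MonoidAlgebra ℂ (Equiv.Perm (Fin n)) :=
  ∑ σ ∈ Finset.univ.filter
      (fun σ : Equiv.Perm (Fin n) => ∀ k, ((e (σ k) : ℕ × ℕ)).2 = ((e k : ℕ × ℕ)).2),
    ((Equiv.Perm.sign σ : ℤ) : ℂ) • MonoidAlgebra.of ℂ (Equiv.Perm (Fin n)) σ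

open Finset Equiv MonoidAlgebra

namespace YS

variable {n : ℕ} {μ : YoungDiagram} (e : Fin n ≃ {c // c ∈ μ.cells})

def rowOf (k : Fin n) : ℕ := ((e k : ℕ × ℕ)).1
def colOf (k : Fin n) : ℕ := ((e k : ℕ × ℕ)).2

def Rset : Finset (Perm (Fin n)) :=
  Finset.univ.filter (fun σ => ∀ k, rowOf e (σ k) = rowOf e k)
def Cset : Finset (Perm (Fin n)) :=
  Finset.univ.filter (fun σ => ∀ k, colOf e (σ k) = colOf e k)

lemma mem_Rset {σ : Perm (Fin n)} : σ ∈ Rset e ↔ ∀ k, rowOf e (σ k) = rowOf e k := by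
  simp [Rset]
lemma mem_Cset {σ : Perm (Fin n)} : σ ∈ Cset e ↔ ∀ k, colOf e (σ k) = colOf e k := by
  simp [Cset]

lemma one_mem_Rset : (1 : Perm (Fin n)) ∈ Rset e := by simp [mem_Rset]
lemma one_mem_Cset : (1 : Perm (Fin n)) ∈ Cset e := by simp [mem_Cset]

lemma inv_mem_Rset {σ : Perm (Fin n)} (h : σ ∈ Rset e) : σ⁻¹ ∈ Rset e := by
  rw [mem_Rset] at h ⊢
  intro k
  have := h (σ⁻¹ k)
  simpa using this.symm

lemma inv_mem_Cset {σ : Perm (Fin n)} (h : σ ∈ Cset e) : σ⁻¹ ∈ Cset e := by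
  rw [mem_Cset] at h ⊢
  intro k
  have := h (σ⁻¹ k)
  simpa using this.symm

lemma mul_mem_Rset {σ τ : Perm (Fin n)} (h : σ ∈ Rset e) (h' : τ ∈ Rset e) :
    σ * τ ∈ Rset e := by
  rw [mem_Rset] at h h' ⊢
  intro k
  simpa [Perm.mul_apply] using (h (τ k)).trans (h' k)

lemma mul_mem_Cset {σ τ : Perm (Fin n)} (h : σ ∈ Cset e) (h' : τ ∈ Cset e) :
    σ * τ ∈ Cset e := by
  rw [mem_Cset] at h h' ⊢
  intro k
  simpa [Perm.mul_apply] using (h (τ k)).trans (h' k)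

/-- A permutation preserving both rows and columns is the identity. -/
lemma eq_one_of_mem_mem {σ : Perm (Fin n)} (hr : σ ∈ Rset e) (hc : σ ∈ Cset e) :
    σ = 1 := by
  rw [mem_Rset] at hr; rw [mem_Cset] at hc
  ext k
  have : e (σ k) = e k := by
    apply Subtype.ext
    exact Prod.ext (hr k) (hc k)
  exact congrArg Fin.val (e.injective this)

/-- Uniqueness of the decomposition `σ = p * q`. -/
lemma decomp_unique {p p' q q' : Perm (Fin n)} (hp : p ∈ Rset e) (hp' : p' ∈ Rset e)
    (hq : q ∈ Cset e) (hq' : q' ∈ Cset e) (h : p * q = p' * q') : p = p' ∧ q = q' := by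
  have h1 : p'⁻¹ * p = q' * q⁻¹ := by
    rw [eq_comm, mul_inv_eq_iff_eq_mul, mul_assoc, h, inv_mul_cancel_left]
  have hmemR : p'⁻¹ * p ∈ Rset e := mul_mem_Rset e (inv_mem_Rset e hp') hp
  have hmemC : p'⁻¹ * p ∈ Cset e := h1 ▸ mul_mem_Cset e hq' (inv_mem_Cset e hq)
  have := eq_one_of_mem_mem e hmemR hmemC
  constructor
  · have : p = p' * 1 := by rw [← this]; group
    simpa using this
  · have h2 : q' * q⁻¹ = 1 := by rw [← h1, this]
    have : q' = q := by
      have := congrArg (· * q) h2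
      simpa [mul_assoc] using this
    exact this.symm

section Counting

variable (g : Fin n ≃ {c // c ∈ μ.cells})

lemma cell_mem (k : Fin n) : (rowOf e k, colOf e k) ∈ μ := by
  have := (e k).2
  rw [YoungDiagram.mem_cells] at this
  simpa [rowOf, colOf] using this

lemma colOf_lt_width (k : Fin n) : colOf e k < μ.rowLen 0 := by
  have h := cell_mem e k
  have h2 : colOf e k < μ.rowLen (rowOf e k) := YoungDiagram.mem_iff_lt_rowLen.mp h
  exact lt_of_lt_of_le h2 (μ.rowLen_anti 0 _ (Nat.zero_le _))

lemma card_fiber_col (j : ℕ) :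
    (Finset.univ.filter (fun k => colOf g k = j)).card = μ.colLen j := by
  rw [YoungDiagram.colLen_eq_card]
  apply Finset.card_nbij (fun k => (g k : ℕ × ℕ))
  · intro k hk
    rw [Finset.mem_coe, YoungDiagram.mem_col_iff]
    exact ⟨(μ.mem_cells _).1 (g k).2, (Finset.mem_filter.1 (Finset.mem_coe.1 hk)).2⟩
  · intro k1 _ k2 _ h
    exact g.injective (Subtype.ext h)
  · intro c hc
    rw [Finset.coe_filter] at *
    obtain ⟨hcμ, hcj⟩ := YoungDiagram.mem_col_iff.1 hc
    refine ⟨g.symm ⟨c, (μ.mem_cells _).2 hcμ⟩, ?_, ?_⟩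
    · simp only [Set.mem_setOf_eq, Finset.mem_univ, true_and, colOf]
      rw [Equiv.apply_symm_apply]
      exact hcj
    · simp [Equiv.apply_symm_apply]

variable (H : ∀ k₁ k₂ : Fin n, rowOf e k₁ = rowOf e k₂ → colOf g k₁ = colOf g k₂ → k₁ = k₂)

include H in
lemma card_lt_fiber_le (i j : ℕ) :
    (Finset.univ.filter fun k => rowOf e k < i ∧ colOf g k = j).card ≤ min i (μ.colLen j) := by
  rw [le_min_iff]
  constructor
  · have : (Finset.univ.filter fun k => rowOf e k < i ∧ colOf g k = j).card
        ≤ (Finset.range i).card := by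
      apply Finset.card_le_card_of_injOn (fun k => rowOf e k)
      · intro k hk
        rw [Finset.mem_coe, Finset.mem_filter] at hk
        exact Finset.mem_range.2 hk.2.1
      · intro k1 hk1 k2 hk2 hr
        simp only [Finset.coe_filter, Set.mem_setOf_eq, Finset.mem_univ, true_and] at hk1 hk2
        exact H k1 k2 hr (hk1.2.trans hk2.2.symm)
    simpa using this
  · rw [← card_fiber_col g j]
    apply Finset.card_le_card
    intro k hk
    simp only [Finset.mem_filter] at hk ⊢
    exact ⟨hk.1, hk.2.2⟩

lemma sum_card_lt (i : ℕ) :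
    ∑ j ∈ Finset.range (μ.rowLen 0),
        (Finset.univ.filter fun k => rowOf e k < i ∧ colOf g k = j).card
      = (Finset.univ.filter fun k : Fin n => rowOf e k < i).card := by
  rw [Finset.card_eq_sum_card_fiberwise (f := fun k => colOf g k)
      (t := Finset.range (μ.rowLen 0)) (fun x _ => Finset.mem_range.2 (colOf_lt_width g x))]
  refine Finset.sum_congr rfl fun j _ => ?_
  rw [Finset.filter_filter]

lemma cells_col_card (i j : ℕ) :
    (μ.cells.filter fun c => c.1 < i ∧ c.2 = j).card = min i (μ.colLen j) := by
  have himg : μ.cells.filter (fun c => c.1 < i ∧ c.2 = j)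
      = (Finset.range (min i (μ.colLen j))).image (fun a => (a, j)) := by
    ext ⟨a, b⟩
    simp only [Finset.mem_filter, Finset.mem_image, Finset.mem_range, lt_min_iff,
      YoungDiagram.mem_cells, Prod.mk.injEq]
    constructor
    · rintro ⟨hm, h1, rfl⟩
      exact ⟨a, ⟨h1, YoungDiagram.mem_iff_lt_colLen.mp hm⟩, rfl, rfl⟩
    · rintro ⟨x, ⟨hx1, hx2⟩, rfl, rfl⟩
      exact ⟨YoungDiagram.mem_iff_lt_colLen.mpr hx2, hx1, rfl⟩
  rw [himg, Finset.card_image_of_injective _ (fun a b hab => (Prod.mk.injEq _ _ _ _ ▸ hab).1),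
    Finset.card_range]

lemma sum_min_eq (i : ℕ) :
    ∑ j ∈ Finset.range (μ.rowLen 0), min i (μ.colLen j)
      = (Finset.univ.filter fun k : Fin n => rowOf e k < i).card := by
  have h1 : (Finset.univ.filter fun k : Fin n => rowOf e k < i).card
      = (μ.cells.filter fun c => c.1 < i).card := by
    apply Finset.card_nbij (fun k => (e k : ℕ × ℕ))
    · intro k hk
      simp only [Finset.mem_coe, Finset.mem_filter] at hk ⊢
      exact ⟨(e k).2, hk.2⟩
    · intro k1 _ k2 _ h
      exact e.injective (Subtype.ext h)
    · intro c hc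
      rw [Finset.coe_filter] at *
      simp only [Set.mem_setOf_eq] at hc
      refine ⟨e.symm ⟨c, hc.1⟩, ?_, by simp⟩
      simp only [Set.mem_setOf_eq, Finset.mem_univ, true_and, rowOf]
      rw [Equiv.apply_symm_apply]
      exact hc.2
  rw [h1, Finset.card_eq_sum_card_fiberwise (f := Prod.snd)
      (t := Finset.range (μ.rowLen 0)) ?_]
  · refine Finset.sum_congr rfl fun j _ => ?_
    rw [← cells_col_card (μ := μ) i j, Finset.filter_filter]
  · intro c hc
    simp only [Finset.mem_coe, Finset.mem_filter, YoungDiagram.mem_cells] at hc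
    apply Finset.mem_range.2
    have h2 : c.2 < μ.rowLen c.1 := YoungDiagram.mem_iff_lt_rowLen.mp hc.1
    exact lt_of_lt_of_le h2 (μ.rowLen_anti 0 _ (Nat.zero_le _))

include H in
lemma card_lt_fiber (i j : ℕ) :
    (Finset.univ.filter fun k => rowOf e k < i ∧ colOf g k = j).card = min i (μ.colLen j) := by
  by_cases hj : j < μ.rowLen 0
  · have hsum : ∑ j ∈ Finset.range (μ.rowLen 0),
        (Finset.univ.filter fun k => rowOf e k < i ∧ colOf g k = j).card
        = ∑ j ∈ Finset.range (μ.rowLen 0), min i (μ.colLen j) := by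
      rw [sum_card_lt e g i, sum_min_eq e i]
    exact (Finset.sum_eq_sum_iff_of_le
      (fun j _ => card_lt_fiber_le e g H i j)).1 hsum j (Finset.mem_range.2 hj)
  · push_neg at hj
    have hcl : μ.colLen j = 0 := by
      by_contra hc
      have : (0, j) ∈ μ := YoungDiagram.mem_iff_lt_colLen.mpr (Nat.pos_of_ne_zero hc)
      have : j < μ.rowLen 0 := YoungDiagram.mem_iff_lt_rowLen.mp this
      omega
    have := card_lt_fiber_le e g H i j
    omega

include H in
lemma card_eq_fiber {i j : ℕ} (hij : (i, j) ∈ μ) :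
    (Finset.univ.filter fun k => rowOf e k = i ∧ colOf g k = j).card = 1 := by
  have hc : i < μ.colLen j := YoungDiagram.mem_iff_lt_colLen.mp hij
  have h1 := card_lt_fiber e g H i j
  have h2 := card_lt_fiber e g H (i + 1) j
  have hsplit : (Finset.univ.filter fun k => rowOf e k < i + 1 ∧ colOf g k = j)
      = (Finset.univ.filter fun k => rowOf e k < i ∧ colOf g k = j)
        ∪ (Finset.univ.filter fun k => rowOf e k = i ∧ colOf g k = j) := by
    ext k
    simp only [Finset.mem_filter, Finset.mem_union, Finset.mem_univ, true_and]
    omega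
  have hdisj : Disjoint (Finset.univ.filter fun k => rowOf e k < i ∧ colOf g k = j)
      (Finset.univ.filter fun k => rowOf e k = i ∧ colOf g k = j) := by
    rw [Finset.disjoint_left]
    intro k hk1 hk2
    simp only [Finset.mem_filter] at hk1 hk2
    omega
  rw [hsplit, Finset.card_union_of_disjoint hdisj] at h2
  omega

end Counting
lemma exists_decomp (σ : Perm (Fin n))
    (H : ∀ k₁ k₂ : Fin n, rowOf e k₁ = rowOf e k₂ →
      colOf e (σ⁻¹ k₁) = colOf e (σ⁻¹ k₂) → k₁ = k₂) :
    ∃ p ∈ Rset e, ∃ q ∈ Cset e, σ = p * q := by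
  set g : Fin n ≃ {c // c ∈ μ.cells} := Equiv.trans (σ⁻¹ : Perm (Fin n)) e with hg
  have hcolg : ∀ k, colOf g k = colOf e (σ⁻¹ k) := fun k => rfl
  have H' : ∀ k₁ k₂, rowOf e k₁ = rowOf e k₂ → colOf g k₁ = colOf g k₂ → k₁ = k₂ := by
    intro k1 k2 h1 h2
    exact H k1 k2 h1 ((hcolg k1).symm.trans (h2.trans (hcolg k2)))
  have hex : ∀ k : Fin n, ∃ k', (rowOf e k' = rowOf e k ∧ colOf g k' = colOf e k) ∧
      ∀ k'', rowOf e k'' = rowOf e k ∧ colOf g k'' = colOf e k → k'' = k' := by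
    intro k
    obtain ⟨a, ha⟩ := Finset.card_eq_one.1 (card_eq_fiber e g H' (cell_mem e k))
    have hmem : ∀ k'' : Fin n, (rowOf e k'' = rowOf e k ∧ colOf g k'' = colOf e k) ↔ k'' = a := by
      intro k''
      constructor
      · intro h
        have : k'' ∈ Finset.univ.filter
            fun x => rowOf e x = rowOf e k ∧ colOf g x = colOf e k := by
          simp only [Finset.mem_filter, Finset.mem_univ, true_and]
          exact h
        rwa [ha, Finset.mem_singleton] at this
      · rintro rfl
        have : k'' ∈ ({k''} : Finset (Fin n)) := Finset.mem_singleton_self _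
        rw [← ha] at this
        simp only [Finset.mem_filter, Finset.mem_univ, true_and] at this
        exact this
    exact ⟨a, (hmem a).2 rfl, fun k'' h => (hmem k'').1 h⟩
  choose pf hpf hunique using hex
  have hinj : Function.Injective pf := by
    intro k1 k2 h
    have h1 := hpf k1
    have h2 := hpf k2
    rw [h] at h1
    have hr : rowOf e k1 = rowOf e k2 := h1.1.symm.trans h2.1
    have hc : colOf e k1 = colOf e k2 := h1.2.symm.trans h2.2
    apply e.injective
    exact Subtype.ext (Prod.ext hr hc)
  let P : Perm (Fin n) := Equiv.ofBijective pf (Finite.injective_iff_bijective.1 hinj)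
  have hPapp : ∀ k, P k = pf k := fun k => rfl
  have hPR : P ∈ Rset e := by
    rw [mem_Rset]
    intro k
    rw [hPapp]
    exact (hpf k).1
  refine ⟨P, hPR, P⁻¹ * σ, ?_, by group⟩
  rw [mem_Cset]
  intro k
  have hmk : P (P⁻¹ (σ k)) = σ k := by simp
  have h1 := (hpf (P⁻¹ (σ k))).2
  rw [hPapp] at hmk
  rw [hmk] at h1
  -- h1 : colOf g (σ k) = colOf e (P⁻¹ (σ k)) ... careful direction
  have h2 : colOf g (σ k) = colOf e k := by
    rw [hcolg]
    congr 1
    simp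
  rw [Perm.mul_apply]
  rw [← h1, h2]
lemma exists_swap (σ : Perm (Fin n)) (h : ∀ p ∈ Rset e, ∀ q ∈ Cset e, σ ≠ p * q) :
    ∃ i j : Fin n, i ≠ j ∧ rowOf e i = rowOf e j ∧ colOf e (σ⁻¹ i) = colOf e (σ⁻¹ j) := by
  by_contra hcon
  push_neg at hcon
  have H : ∀ k₁ k₂ : Fin n, rowOf e k₁ = rowOf e k₂ →
      colOf e (σ⁻¹ k₁) = colOf e (σ⁻¹ k₂) → k₁ = k₂ := by
    intro k1 k2 h1 h2
    by_contra hne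
    exact hcon k1 k2 hne h1 h2
  obtain ⟨p, hp, q, hq, rfl⟩ := exists_decomp e σ H
  exact h p hp q hq rfl

/-! ### Algebraic part -/

noncomputable def Psym : MonoidAlgebra ℂ (Perm (Fin n)) :=
  ∑ σ ∈ Rset e, MonoidAlgebra.of ℂ (Perm (Fin n)) σ

noncomputable def Qsym : MonoidAlgebra ℂ (Perm (Fin n)) :=
  ∑ σ ∈ Cset e, ((Perm.sign σ : ℤ) : ℂ) • MonoidAlgebra.of ℂ (Perm (Fin n)) σ

lemma rowSymmetrizer_eq : rowSymmetrizer n μ e = Psym e := rfl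
lemma colSymmetrizer_eq : colSymmetrizer n μ e = Qsym e := rfl

lemma Rset_map_left {p : Perm (Fin n)} (hp : p ∈ Rset e) :
    (Rset e).map (Equiv.mulLeft p).toEmbedding = Rset e := by
  ext σ
  simp only [Finset.mem_map, Equiv.coe_toEmbedding, Equiv.coe_mulLeft]
  constructor
  · rintro ⟨τ, hτ, rfl⟩
    exact mul_mem_Rset e hp hτ
  · intro hσ
    exact ⟨p⁻¹ * σ, mul_mem_Rset e (inv_mem_Rset e hp) hσ, by group⟩

lemma Cset_map_right {q : Perm (Fin n)} (hq : q ∈ Cset e) :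
    (Cset e).map (Equiv.mulRight q).toEmbedding = Cset e := by
  ext σ
  simp only [Finset.mem_map, Equiv.coe_toEmbedding, Equiv.coe_mulRight]
  constructor
  · rintro ⟨τ, hτ, rfl⟩
    exact mul_mem_Cset e hτ hq
  · intro hσ
    exact ⟨σ * q⁻¹, mul_mem_Cset e hσ (inv_mem_Cset e hq), by group⟩

lemma of_mul_Psym {p : Perm (Fin n)} (hp : p ∈ Rset e) :
    MonoidAlgebra.of ℂ (Perm (Fin n)) p * Psym e = Psym e := by
  calc MonoidAlgebra.of ℂ (Perm (Fin n)) p * Psym e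
      = ∑ σ ∈ Rset e, MonoidAlgebra.of ℂ (Perm (Fin n)) (p * σ) := by
        rw [Psym, Finset.mul_sum]
        simp [MonoidAlgebra.of_apply, MonoidAlgebra.single_mul_single]
    _ = ∑ σ ∈ (Rset e).map (Equiv.mulLeft p).toEmbedding,
          MonoidAlgebra.of ℂ (Perm (Fin n)) σ := by
        rw [Finset.sum_map]
        rfl
    _ = Psym e := by rw [Rset_map_left e hp]; rfl

lemma Qsym_mul_of {q : Perm (Fin n)} (hq : q ∈ Cset e) :
    Qsym e * MonoidAlgebra.of ℂ (Perm (Fin n)) q = ((Perm.sign q : ℤ) : ℂ) • Qsym e := by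
  have hsq : ((Perm.sign q : ℤ) : ℂ) * ((Perm.sign q : ℤ) : ℂ) = 1 := by
    rw [← Int.cast_mul, ← Units.val_mul]
    simp
  calc Qsym e * MonoidAlgebra.of ℂ (Perm (Fin n)) q
      = ∑ σ ∈ Cset e, ((Perm.sign σ : ℤ) : ℂ) •
          MonoidAlgebra.of ℂ (Perm (Fin n)) (σ * q) := by
        rw [Qsym, Finset.sum_mul]
        simp [MonoidAlgebra.of_apply, MonoidAlgebra.single_mul_single, smul_mul_assoc]
    _ = ∑ σ ∈ Cset e, ((Perm.sign q : ℤ) : ℂ) • (((Perm.sign (σ * q) : ℤ) : ℂ) •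
          MonoidAlgebra.of ℂ (Perm (Fin n)) (σ * q)) := by
        refine Finset.sum_congr rfl fun σ _ => ?_
        rw [smul_smul]
        congr 1
        rw [map_mul]
        push_cast
        ring_nf
        rw [sq, hsq, one_mul]
    _ = ((Perm.sign q : ℤ) : ℂ) • ∑ σ ∈ Cset e, (((Perm.sign (σ * q) : ℤ) : ℂ) •
          MonoidAlgebra.of ℂ (Perm (Fin n)) (σ * q)) := by rw [Finset.smul_sum]
    _ = ((Perm.sign q : ℤ) : ℂ) • Qsym e := by
        congr 1
        calc ∑ σ ∈ Cset e, (((Perm.sign (σ * q) : ℤ) : ℂ) •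
              MonoidAlgebra.of ℂ (Perm (Fin n)) (σ * q))
            = ∑ σ ∈ (Cset e).map (Equiv.mulRight q).toEmbedding,
              (((Perm.sign σ : ℤ) : ℂ) • MonoidAlgebra.of ℂ (Perm (Fin n)) σ) := by
              rw [Finset.sum_map]
              rfl
          _ = Qsym e := by rw [Cset_map_right e hq]; rfl
lemma PQ_apply (σ : Perm (Fin n)) :
    (Psym e * Qsym e).coeff σ =
      ∑ p ∈ Rset e, ∑ q ∈ Cset e,
        if p * q = σ then ((Perm.sign q : ℤ) : ℂ) else 0 := by
  rw [Psym, Qsym, Finset.sum_mul, MonoidAlgebra.coeff_sum, Finset.sum_apply']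
  refine Finset.sum_congr rfl fun p _ => ?_
  rw [Finset.mul_sum, MonoidAlgebra.coeff_sum, Finset.sum_apply']
  refine Finset.sum_congr rfl fun q _ => ?_
  rw [MonoidAlgebra.of_apply, MonoidAlgebra.of_apply, mul_smul_comm,
    MonoidAlgebra.single_mul_single, mul_one, MonoidAlgebra.coeff_smul, Finsupp.smul_apply,
    MonoidAlgebra.coeff_single, Finsupp.single_apply]
  split_ifs <;> simp

lemma PQ_apply_decomp {p₀ q₀ : Perm (Fin n)} (hp₀ : p₀ ∈ Rset e) (hq₀ : q₀ ∈ Cset e) :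
    (Psym e * Qsym e).coeff (p₀ * q₀) = ((Perm.sign q₀ : ℤ) : ℂ) := by
  rw [PQ_apply]
  rw [Finset.sum_eq_single p₀]
  · rw [Finset.sum_eq_single q₀]
    · simp
    · intro q hq hne
      rw [if_neg]
      intro h
      exact hne (mul_left_cancel h)
    · intro h
      exact absurd hq₀ h
  · intro p hp hne
    apply Finset.sum_eq_zero
    intro q hq
    rw [if_neg]
    intro h
    exact hne (decomp_unique e hp hp₀ hq hq₀ h).1
  · intro h
    exact absurd hp₀ h

lemma PQ_apply_zero {σ : Perm (Fin n)} (h : ∀ p ∈ Rset e, ∀ q ∈ Cset e, σ ≠ p * q) :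
    (Psym e * Qsym e).coeff σ = 0 := by
  rw [PQ_apply]
  apply Finset.sum_eq_zero
  intro p hp
  apply Finset.sum_eq_zero
  intro q hq
  rw [if_neg]
  intro heq
  exact h p hp q hq heq.symm

lemma swap_mem_Rset {i j : Fin n} (h : rowOf e i = rowOf e j) : Equiv.swap i j ∈ Rset e := by
  rw [mem_Rset]
  intro k
  rcases eq_or_ne k i with rfl | hki
  · rw [Equiv.swap_apply_left]; exact h.symm
  rcases eq_or_ne k j with rfl | hkj
  · rw [Equiv.swap_apply_right]; exact h
  · rw [Equiv.swap_apply_of_ne_of_ne hki hkj]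

lemma swap_mem_Cset {i j : Fin n} (h : colOf e i = colOf e j) : Equiv.swap i j ∈ Cset e := by
  rw [mem_Cset]
  intro k
  rcases eq_or_ne k i with rfl | hki
  · rw [Equiv.swap_apply_left]; exact h.symm
  rcases eq_or_ne k j with rfl | hkj
  · rw [Equiv.swap_apply_right]; exact h
  · rw [Equiv.swap_apply_of_ne_of_ne hki hkj]

/-- The sandwich lemma: any element `a` with `p a (sgn q • q) = a` for all `p ∈ R`,
`q ∈ C` is a scalar multiple of the Young symmetrizer. -/
lemma sandwich (a : MonoidAlgebra ℂ (Perm (Fin n)))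
    (ha : ∀ p ∈ Rset e, ∀ q ∈ Cset e,
      MonoidAlgebra.of ℂ (Perm (Fin n)) p * a * MonoidAlgebra.of ℂ (Perm (Fin n)) q
        = ((Perm.sign q : ℤ) : ℂ) • a) :
    a = a.coeff 1 • (Psym e * Qsym e) := by
  ext σ
  rw [MonoidAlgebra.coeff_smul_apply, smul_eq_mul]
  by_cases hd : ∃ p ∈ Rset e, ∃ q ∈ Cset e, σ = p * q
  · obtain ⟨p, hp, q, hq, rfl⟩ := hd
    rw [PQ_apply_decomp e hp hq]
    have h1 := congrArg (fun x : MonoidAlgebra ℂ (Perm (Fin n)) => x.coeff (p * q)) (ha p hp q hq)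
    simp only [MonoidAlgebra.of_apply] at h1
    rw [MonoidAlgebra.coeff_mul_single_apply, MonoidAlgebra.coeff_single_mul_apply] at h1
    simp only [mul_inv_cancel_right, one_mul, mul_one] at h1
    rw [inv_mul_cancel] at h1
    rw [MonoidAlgebra.coeff_smul_apply] at h1
    rw [smul_eq_mul] at h1
    have hsq : ((Perm.sign q : ℤ) : ℂ) * ((Perm.sign q : ℤ) : ℂ) = 1 := by
      rw [← Int.cast_mul, ← Units.val_mul]
      simp
    -- h1 : a 1 = sign q * a (p * q)
    have h2 := congrArg (fun x => ((Perm.sign q : ℤ) : ℂ) * x) h1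
    rw [← mul_assoc, hsq, one_mul] at h2
    rw [← h2]
    ring
  · push_neg at hd
    rw [PQ_apply_zero e hd, mul_zero]
    obtain ⟨i, j, hij, hrow, hcol⟩ := exists_swap e σ hd
    set t : Perm (Fin n) := Equiv.swap i j with ht
    set u : Perm (Fin n) := Equiv.swap (σ⁻¹ i) (σ⁻¹ j) with hu
    have htR : t ∈ Rset e := swap_mem_Rset e hrow
    have huC : u ∈ Cset e := swap_mem_Cset e hcol
    have hsgnu : ((Perm.sign u : ℤ) : ℂ) = -1 := by
      rw [hu, Equiv.Perm.sign_swap (fun hc => hij (σ⁻¹.injective hc))]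
      simp
    have h1 := congrArg (fun x : MonoidAlgebra ℂ (Perm (Fin n)) => x.coeff σ) (ha t htR u huC)
    simp only [MonoidAlgebra.of_apply] at h1
    rw [MonoidAlgebra.coeff_mul_single_apply, MonoidAlgebra.coeff_single_mul_apply] at h1
    simp only [one_mul, mul_one] at h1
    rw [MonoidAlgebra.coeff_smul_apply] at h1
    rw [hsgnu, smul_eq_mul] at h1
    have harg : t⁻¹ * (σ * u⁻¹) = σ := by
      have hti : t⁻¹ = t := by rw [ht]; exact Equiv.swap_inv i j
      have hui : u⁻¹ = u := by rw [hu]; exact Equiv.swap_inv _ _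
      have huconj : u = σ⁻¹ * t * σ := by
        rw [hu, ht]
        have := Equiv.swap_apply_apply (σ⁻¹) i j
        rw [this]
        group
      rw [hti, hui, huconj]
      calc t * (σ * (σ⁻¹ * t * σ)) = t * t * σ := by group
        _ = σ := by rw [ht, Equiv.swap_mul_self, one_mul]
    rw [harg] at h1
    -- h1 : a σ = -1 * a σ
    have h2 : a.coeff σ + a.coeff σ = 0 := by linear_combination h1
    exact add_self_eq_zero.mp h2
lemma PQ_one : (Psym e * Qsym e).coeff 1 = 1 := by
  have h := PQ_apply_decomp e (one_mem_Rset e) (one_mem_Cset e)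
  simpa using h

lemma sandwich_property {p q : Perm (Fin n)} (hp : p ∈ Rset e) (hq : q ∈ Cset e) :
    MonoidAlgebra.of ℂ (Perm (Fin n)) p * (Psym e * Qsym e * (Psym e * Qsym e)) *
      MonoidAlgebra.of ℂ (Perm (Fin n)) q
      = ((Perm.sign q : ℤ) : ℂ) • (Psym e * Qsym e * (Psym e * Qsym e)) := by
  calc MonoidAlgebra.of ℂ (Perm (Fin n)) p * (Psym e * Qsym e * (Psym e * Qsym e)) *
      MonoidAlgebra.of ℂ (Perm (Fin n)) q
      = (MonoidAlgebra.of ℂ (Perm (Fin n)) p * Psym e) *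
        (Qsym e * Psym e * (Qsym e * MonoidAlgebra.of ℂ (Perm (Fin n)) q)) := by
        noncomm_ring
    _ = Psym e * (Qsym e * Psym e * (((Perm.sign q : ℤ) : ℂ) • Qsym e)) := by
        rw [of_mul_Psym e hp, Qsym_mul_of e hq]
    _ = ((Perm.sign q : ℤ) : ℂ) • (Psym e * (Qsym e * Psym e * Qsym e)) := by
        rw [mul_smul_comm, mul_smul_comm]
    _ = ((Perm.sign q : ℤ) : ℂ) • (Psym e * Qsym e * (Psym e * Qsym e)) := by
        congr 1
        noncomm_ring

lemma young_sq : Psym e * Qsym e * (Psym e * Qsym e)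
    = (Psym e * Qsym e * (Psym e * Qsym e)).coeff 1 • (Psym e * Qsym e) :=
  sandwich e _ (fun p hp q hq => sandwich_property e hp hq)

end YS

open YS Equiv in
/-- For a standard Young tableau `Λ` of shape `λ ⊢ n` (encoded by a bijection
`e : Fin n ≃ cells λ` whose entries increase along rows and down columns), the
Young symmetrizer `Y_Λ = P_Λ Q_Λ` satisfies `Y_Λ² = α_Λ · Y_Λ` for some positive
rational number `α_Λ`. -/
theorem young_symmetrizer_sq (n : ℕ) (μ : YoungDiagram) (hμ : μ.card = n)
    (e : Fin n ≃ {c // c ∈ μ.cells})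
    (hrow : ∀ j k : Fin n, ((e j : ℕ × ℕ)).1 = ((e k : ℕ × ℕ)).1 →
      ((e j : ℕ × ℕ)).2 < ((e k : ℕ × ℕ)).2 → j < k)
    (hcol : ∀ j k : Fin n, ((e j : ℕ × ℕ)).2 = ((e k : ℕ × ℕ)).2 →
      ((e j : ℕ × ℕ)).1 < ((e k : ℕ × ℕ)).1 → j < k) :
    ∃ α : ℚ, 0 < α ∧
      (rowSymmetrizer n μ e * colSymmetrizer n μ e) *
          (rowSymmetrizer n μ e * colSymmetrizer n μ e) =
        (α : ℂ) • (rowSymmetrizer n μ e * colSymmetrizer n μ e) := by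
  classical
  rw [rowSymmetrizer_eq, colSymmetrizer_eq]
  set Y : MonoidAlgebra ℂ (Perm (Fin n)) := Psym e * Qsym e with hY
  set β : ℂ := (Y * Y).coeff 1 with hβdef
  have hYY : Y * Y = β • Y := young_sq e
  -- the linear endomorphism of right multiplication by Y
  set T : Module.End ℂ (MonoidAlgebra ℂ (Perm (Fin n))) := LinearMap.mulRight ℂ Y with hT
  have hmulYY : LinearMap.mulRight ℂ (Y * Y) = T * T := LinearMap.mulRight_mul ℂ _ Y Y
  have hTT : T * T = β • T := by
    rw [← hmulYY, hYY]
    apply LinearMap.ext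
    intro x
    simp [hT, LinearMap.mulRight_apply, mul_smul_comm]
  -- trace of T
  have hfin : Module.Finite ℂ (MonoidAlgebra ℂ (Perm (Fin n))) :=
    Module.Finite.equiv ((Finsupp.linearEquivFunOnFinite ℂ ℂ (Perm (Fin n))).symm.trans
      (MonoidAlgebra.coeffLinearEquiv ℂ).symm)
  have htr : LinearMap.trace ℂ (MonoidAlgebra ℂ (Perm (Fin n))) T = (n.factorial : ℂ) := by
    let b : Module.Basis (Perm (Fin n)) ℂ (MonoidAlgebra ℂ (Perm (Fin n))) := MonoidAlgebra.basis (Perm (Fin n)) ℂ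
    rw [LinearMap.trace_eq_matrix_trace ℂ b, Matrix.trace]
    have hdiag : ∀ g : Perm (Fin n), (LinearMap.toMatrix b b T).diag g = 1 := by
      intro g
      rw [Matrix.diag_apply, LinearMap.toMatrix_apply]
      have key : (T (MonoidAlgebra.single g 1)).coeff g = 1 := by
        rw [hT, LinearMap.mulRight_apply, MonoidAlgebra.coeff_single_mul_apply,
          inv_mul_cancel, one_mul]
        exact PQ_one e
      exact key
    rw [Finset.sum_congr rfl (fun g _ => hdiag g)]
    simp [Finset.card_univ, Fintype.card_perm]
  have hβ0 : β ≠ 0 := by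
    intro h0
    have hnil : IsNilpotent T := ⟨2, by rw [sq, hTT, h0, zero_smul]⟩
    have h1 := LinearMap.isNilpotent_trace_of_isNilpotent hnil
    rw [htr] at h1
    have h2 := h1.eq_zero
    exact Nat.factorial_ne_zero n (by exact_mod_cast h2)
  -- idempotent
  set E : Module.End ℂ (MonoidAlgebra ℂ (Perm (Fin n))) := β⁻¹ • T with hE
  have hEE : E * E = E := by
    rw [hE, smul_mul_assoc, mul_smul_comm, hTT, smul_smul, smul_smul,
      mul_assoc, inv_mul_cancel₀ hβ0, mul_one]
  have hproj : LinearMap.IsProj (LinearMap.range E) E := by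
    refine ⟨fun x => LinearMap.mem_range_self E x, ?_⟩
    rintro x ⟨y, rfl⟩
    have := DFunLike.congr_fun hEE y
    rwa [Module.End.mul_apply] at this
  have htrE := hproj.trace
  set m : ℕ := Module.finrank ℂ (LinearMap.range E) with hm
  have hTE : T = β • E := by
    rw [hE, smul_smul, mul_inv_cancel₀ hβ0, one_smul]
  have htr2 : (n.factorial : ℂ) = β * m := by
    rw [← htr, hTE, map_smul, htrE, smul_eq_mul]
  have hm0 : m ≠ 0 := by
    intro h
    rw [h] at htr2
    simp only [Nat.cast_zero, mul_zero] at htr2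
    exact Nat.factorial_ne_zero n (by exact_mod_cast htr2)
  refine ⟨(n.factorial : ℚ) / (m : ℚ), ?_, ?_⟩
  · apply div_pos
    · exact_mod_cast Nat.factorial_pos n
    · exact_mod_cast Nat.pos_of_ne_zero hm0
  · rw [hYY]
    congr 1
    have hmC : (m : ℂ) ≠ 0 := Nat.cast_ne_zero.mpr hm0
    push_cast
    rw [eq_div_iff hmC]
    exact htr2.symm
end

section
/- In ℂ[S_n], for any partition λ with a single row (λ = (n)) and its unique standard tableau Λ, the ordered product F_Λ = ∏_{(p,q), lexicographic} (1 - (p q)/(c_p - c_q)) with contents c_k = k - 1 equals the normalized row symmetrizer: F_Λ = P_Λ Q_Λ P_Λ / n! = Σ_{σ ∈ S_n} σ (the sum of all permutations). -/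
/-- The list of pairs `(p, q)` with `p < q` in `Fin n`, in lexicographic order. -/
def lexPairs (n : ℕ) : List (Fin n × Fin n) :=
  (List.finRange n).flatMap fun p =>
    ((List.finRange n).filter fun q => p < q).map fun q => (p, q)

/-- The fusion product for the single-row tableau: the ordered product, over the
pairs `(p,q)` with `p < q` taken in lexicographic order, of
`f_{pq}(c_p, c_q) = 1 - (p q)/(c_p - c_q)`, with contents `c_k = k`
(0-indexed; i.e. `c_k = k - 1` with 1-indexed entries). -/
noncomputable def rowFusion (n : ℕ) : MonoidAlgebra ℂ (Equiv.Perm (Fin n)) :=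
  ((lexPairs n).map fun pq =>
    (1 : MonoidAlgebra ℂ (Equiv.Perm (Fin n))) -
      (((pq.1 : ℕ) : ℂ) - ((pq.2 : ℕ) : ℂ))⁻¹ •
        MonoidAlgebra.of ℂ (Equiv.Perm (Fin n)) (Equiv.swap pq.1 pq.2)).prod

namespace RowFusionAux

open Equiv List

noncomputable def δ {n : ℕ} (σ : Equiv.Perm (Fin n)) : MonoidAlgebra ℂ (Equiv.Perm (Fin n)) :=
  MonoidAlgebra.of ℂ (Equiv.Perm (Fin n)) σ

lemma δ_mul {n : ℕ} (σ τ : Equiv.Perm (Fin n)) : δ σ * δ τ = δ (σ * τ) :=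
  (map_mul (MonoidAlgebra.of ℂ (Equiv.Perm (Fin n))) σ τ).symm

lemma δ_one {n : ℕ} : δ (1 : Equiv.Perm (Fin n)) = 1 :=
  map_one (MonoidAlgebra.of ℂ (Equiv.Perm (Fin n)))

/-- Sum over all permutations fixing `{0, …, k-1}` pointwise. -/
noncomputable def T (n k : ℕ) : MonoidAlgebra ℂ (Equiv.Perm (Fin n)) :=
  ∑ σ ∈ Finset.univ.filter
      (fun σ : Equiv.Perm (Fin n) => ∀ i : Fin n, (i : ℕ) < k → σ i = i), δ σ

lemma delta_mul_T {n k : ℕ} (τ : Equiv.Perm (Fin n))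
    (hτ : ∀ i : Fin n, (i : ℕ) < k → τ i = i) : δ τ * T n k = T n k := by
  unfold T
  rw [Finset.mul_sum]
  refine Finset.sum_nbij' (fun σ => τ * σ) (fun σ => τ⁻¹ * σ) ?_ ?_ ?_ ?_ ?_
  · intro σ hσ
    simp only [Finset.mem_filter, Finset.mem_univ, true_and] at hσ ⊢
    intro i hi
    simp [Equiv.Perm.mul_apply, hσ i hi, hτ i hi]
  · intro σ hσ
    simp only [Finset.mem_filter, Finset.mem_univ, true_and] at hσ ⊢
    intro i hi
    have h1 : τ⁻¹ i = i := by
      conv_lhs => rw [← hτ i hi]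
      simp
    simp [Equiv.Perm.mul_apply, hσ i hi, h1]
  · intro σ _; group
  · intro σ _; group
  · intro σ _; rw [δ_mul]

lemma swap_fix {n : ℕ} (a b i : Fin n) (ha : i ≠ a) (hb : i ≠ b) :
    Equiv.swap a b i = i := Equiv.swap_apply_of_ne_of_ne ha hb

/-- Coset decomposition of `T n k` according to the image of `k`. -/
lemma T_coset {n k : ℕ} (hk : k < n) :
    T n k = ∑ q ∈ Finset.univ.filter (fun q : Fin n => k ≤ (q : ℕ)),
      δ (Equiv.swap ⟨k, hk⟩ q) * T n (k + 1) := by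
  have key : ∀ q ∈ Finset.univ.filter (fun q : Fin n => k ≤ (q : ℕ)),
      δ (Equiv.swap ⟨k, hk⟩ q) * T n (k + 1) =
      ∑ σ ∈ (Finset.univ.filter
          (fun σ : Equiv.Perm (Fin n) => ∀ i : Fin n, (i : ℕ) < k → σ i = i)).filter
          (fun σ => σ ⟨k, hk⟩ = q), δ σ := by
    intro q hq
    simp only [Finset.mem_filter, Finset.mem_univ, true_and] at hq
    unfold T
    rw [Finset.mul_sum]
    refine Finset.sum_nbij' (fun σ => Equiv.swap ⟨k, hk⟩ q * σ)
      (fun σ => Equiv.swap ⟨k, hk⟩ q * σ) ?_ ?_ ?_ ?_ ?_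
    · intro σ hσ
      simp only [Finset.mem_filter, Finset.mem_univ, true_and] at hσ ⊢
      constructor
      · intro i hi
        have hik : i ≠ ⟨k, hk⟩ := by
          intro h; rw [h] at hi; exact absurd hi (lt_irrefl k)
        have hiq : i ≠ q := by
          intro h; rw [h] at hi; omega
        simp [Equiv.Perm.mul_apply, hσ i (Nat.lt_succ_of_lt hi), swap_fix _ _ _ hik hiq]
      · have : σ ⟨k, hk⟩ = ⟨k, hk⟩ := hσ ⟨k, hk⟩ (Nat.lt_succ_self k)
        simp [Equiv.Perm.mul_apply, this]
    · intro σ hσ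
      simp only [Finset.mem_filter, Finset.mem_univ, true_and] at hσ ⊢
      obtain ⟨h1, h2⟩ := hσ
      intro i hi
      rcases Nat.lt_succ_iff_lt_or_eq.mp hi with hi' | hi'
      · have hik : i ≠ ⟨k, hk⟩ := by
          intro h; rw [h] at hi'; exact absurd hi' (lt_irrefl k)
        have hiq : i ≠ q := by
          intro h; rw [h] at hi'; omega
        simp [Equiv.Perm.mul_apply, h1 i hi', swap_fix _ _ _ hik hiq]
      · have : i = ⟨k, hk⟩ := Fin.ext hi'
        subst this
        simp [Equiv.Perm.mul_apply, h2]
    · intro σ _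
      rw [← mul_assoc, Equiv.swap_mul_self, one_mul]
    · intro σ _
      rw [← mul_assoc, Equiv.swap_mul_self, one_mul]
    · intro σ _; rw [δ_mul]
  rw [Finset.sum_congr rfl key]
  unfold T
  rw [Finset.sum_fiberwise_of_maps_to]
  intro σ hσ
  simp only [Finset.mem_filter, Finset.mem_univ, true_and] at hσ ⊢
  by_contra h
  push_neg at h
  have h2 : σ (σ ⟨k, hk⟩) = σ ⟨k, hk⟩ := hσ _ h
  have := σ.injective h2
  rw [this] at h
  exact absurd h (lt_irrefl k)

lemma swap_mul_swap' {n : ℕ} (p q r : Fin n) (hpq : p ≠ q) (hpr : p ≠ r) (hqr : q ≠ r) :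
    Equiv.swap p q * Equiv.swap p r = Equiv.swap p r * Equiv.swap q r := by
  ext x
  simp only [Equiv.Perm.mul_apply, Equiv.swap_apply_def]
  rcases eq_or_ne x p with h | h <;> rcases eq_or_ne x q with h' | h' <;>
    rcases eq_or_ne x r with h'' | h'' <;>
    simp_all [hpq, hpr, hqr, hpq.symm, hpr.symm, hqr.symm]

/-- The augmentation lemma: a product of factors `1 + c_q • swap p q` applied to
`swap p r * T (p+1)` just multiplies it by the product of `1 + c_q`. -/
lemma aug {n : ℕ} (p r : Fin n) (hpr : (p : ℕ) < (r : ℕ)) :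
    ∀ L : List (Fin n), (∀ q ∈ L, (p : ℕ) < (q : ℕ) ∧ (q : ℕ) ≠ (r : ℕ)) →
    ((L.map (fun (q : Fin n) => (1 : MonoidAlgebra ℂ (Equiv.Perm (Fin n))) +
        (((q : ℕ) : ℂ) - ((p : ℕ) : ℂ))⁻¹ • δ (Equiv.swap p q))).prod) *
        (δ (Equiv.swap p r) * T n ((p : ℕ) + 1))
      = ((L.map (fun (q : Fin n) => (1 : ℂ) + (((q : ℕ) : ℂ) - ((p : ℕ) : ℂ))⁻¹)).prod) •
        (δ (Equiv.swap p r) * T n ((p : ℕ) + 1)) := by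
  intro L
  induction L with
  | nil => intro _; simp
  | cons q L ih =>
    intro hL
    have hhd := hL q List.mem_cons_self
    obtain ⟨hpq, hqr⟩ := hhd
    have hL' : ∀ x ∈ L, (p : ℕ) < (x : ℕ) ∧ (x : ℕ) ≠ (r : ℕ) :=
      fun x hx => hL x (List.mem_cons_of_mem q hx)
    have hpq' : p ≠ q := fun h => by rw [h] at hpq; exact absurd hpq (lt_irrefl _)
    have hpr' : p ≠ r := fun h => by rw [h] at hpr; exact absurd hpr (lt_irrefl _)
    have hqr' : q ≠ r := fun h => hqr (by rw [h])
    set c : ℂ := (((q : ℕ) : ℂ) - ((p : ℕ) : ℂ))⁻¹ with hc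
    set Y : MonoidAlgebra ℂ (Equiv.Perm (Fin n)) := δ (Equiv.swap p r) * T n ((p : ℕ) + 1) with hY
    have step : ((1 : MonoidAlgebra ℂ (Equiv.Perm (Fin n))) + c • δ (Equiv.swap p q)) * Y
        = (1 + c) • Y := by
      have hfix : δ (Equiv.swap q r) * T n ((p : ℕ) + 1) = T n ((p : ℕ) + 1) := by
        apply delta_mul_T
        intro i hi
        apply swap_fix
        · intro h; rw [h] at hi; omega
        · intro h; rw [h] at hi; omega
      have : δ (Equiv.swap p q) * Y = Y := by
        rw [hY, ← mul_assoc, δ_mul, swap_mul_swap' p q r hpq' hpr' hqr', ← δ_mul,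
          mul_assoc, hfix]
      rw [add_mul, one_mul, smul_mul_assoc, this, add_smul, one_smul]
    rw [List.map_cons, List.prod_cons, mul_assoc, ih hL', mul_smul_comm, step,
      List.map_cons, List.prod_cons, mul_comm ((1:ℂ) + c), mul_smul]

lemma finRange_filter_lt : ∀ (n : ℕ) (p : Fin n),
    (List.finRange n).filter (fun q => p < q) = (List.finRange n).drop ((p : ℕ) + 1) := by
  intro n
  induction n with
  | zero => exact fun p => absurd p.isLt (by omega)
  | succ n ih =>
    intro p
    rw [List.finRange_succ]
    rcases Fin.eq_zero_or_eq_succ p with rfl | ⟨i, rfl⟩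
    · rw [List.filter_cons]
      have h0 : (decide ((0 : Fin (n+1)) < (0 : Fin (n+1)))) = false := by simp
      rw [h0]
      simp only [Bool.false_eq_true, if_false]
      have hall : ∀ q ∈ (List.finRange n).map Fin.succ,
          decide ((0 : Fin (n+1)) < q) = true := by
        intro q hq
        obtain ⟨j, _, rfl⟩ := List.mem_map.mp hq
        simp [Fin.succ_pos j]
      rw [List.filter_eq_self.mpr hall]
      simp
    · have hpred : ((fun q => decide (Fin.succ i < q)) ∘ Fin.succ)
          = fun q : Fin n => decide (i < q) := by
        funext q
        simp [Function.comp, Fin.succ_lt_succ_iff]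
      rw [List.filter_cons]
      have h0 : (decide (Fin.succ i < (0 : Fin (n+1)))) = false := by
        simp [Fin.lt_def]
      rw [h0]
      simp only [Bool.false_eq_true, if_false]
      rw [List.filter_map, hpred, ih i, List.map_drop]
      have hv : ((Fin.succ i : Fin (n+1)) : ℕ) + 1 = ((i : ℕ) + 1) + 1 := by simp
      rw [hv, List.drop_succ_cons]

lemma T_top (n : ℕ) : T n n = 1 := by
  unfold T
  have h : Finset.univ.filter
      (fun σ : Equiv.Perm (Fin n) => ∀ i : Fin n, (i : ℕ) < n → σ i = i) = {1} := by
    ext σ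
    simp only [Finset.mem_filter, Finset.mem_univ, true_and, Finset.mem_singleton]
    constructor
    · intro h
      exact Equiv.ext fun i => (h i i.isLt)
    · rintro rfl i _
      rfl
  rw [h, Finset.sum_singleton, δ_one]

lemma T_zero (n : ℕ) :
    T n 0 = ∑ σ : Equiv.Perm (Fin n), MonoidAlgebra.of ℂ (Equiv.Perm (Fin n)) σ := by
  unfold T
  rw [Finset.filter_true_of_mem (fun σ _ => by omega)]
  rfl

/-- The key block lemma with simultaneous scalar bookkeeping. -/
lemma block_aux {n : ℕ} (p : Fin n) :
    ∀ t, t ≤ ((List.finRange n).drop ((p : ℕ) + 1)).length →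
    ((((List.finRange n).drop ((p : ℕ) + 1)).take t).map
        (fun (q : Fin n) => (1 : MonoidAlgebra ℂ (Equiv.Perm (Fin n))) +
          (((q : ℕ) : ℂ) - ((p : ℕ) : ℂ))⁻¹ • δ (Equiv.swap p q))).prod * T n ((p : ℕ) + 1)
      = (∑ q ∈ Finset.univ.filter
            (fun q : Fin n => (p : ℕ) ≤ (q : ℕ) ∧ (q : ℕ) < (p : ℕ) + 1 + t),
          δ (Equiv.swap p q)) * T n ((p : ℕ) + 1)
    ∧ ((((List.finRange n).drop ((p : ℕ) + 1)).take t).map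
        (fun (q : Fin n) => (1 : ℂ) + (((q : ℕ) : ℂ) - ((p : ℕ) : ℂ))⁻¹)).prod = (t : ℂ) + 1 := by
  set L : List (Fin n) := (List.finRange n).drop ((p : ℕ) + 1) with hLdef
  have hLlen : L.length = n - ((p : ℕ) + 1) := by
    rw [hLdef, List.length_drop, List.length_finRange]
  have hLget : ∀ (j : ℕ) (hj : j < L.length), L[j] = ⟨(p : ℕ) + 1 + j, by omega⟩ := by
    intro j hj
    have hj' : (p : ℕ) + 1 + j < n := by omega
    apply Fin.ext
    simp [hLdef]
  intro t
  induction t with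
  | zero =>
    intro _
    constructor
    · have hf : Finset.univ.filter
          (fun q : Fin n => (p : ℕ) ≤ (q : ℕ) ∧ (q : ℕ) < (p : ℕ) + 1 + 0) = {p} := by
        ext q
        simp only [Finset.mem_filter, Finset.mem_univ, true_and, Finset.mem_singleton,
          Fin.ext_iff]
        omega
      rw [hf, Finset.sum_singleton, Equiv.swap_self]
      simp only [List.take_zero, List.map_nil, List.prod_nil, one_mul]
      have : δ (Equiv.refl (Fin n)) = 1 := δ_one
      rw [this, one_mul]
    · simp
  | succ t iht =>
    intro ht
    have ht' : t < L.length := by omega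
    obtain ⟨ih1, ih2⟩ := iht (le_of_lt ht')
    set r : Fin n := ⟨(p : ℕ) + 1 + t, by omega⟩ with hrdef
    have hgetr : L[t] = r := hLget t ht'
    have htake : L.take (t + 1) = L.take t ++ [r] := by
      rw [List.take_succ, List.getElem?_eq_getElem ht', hgetr]
      rfl
    have hmemtake : ∀ q ∈ L.take t, (p : ℕ) < (q : ℕ) ∧ (q : ℕ) ≠ (r : ℕ) := by
      intro q hq
      obtain ⟨j, hj, hjq⟩ := List.mem_iff_getElem.mp hq
      have hjlen : j < t := by
        have := hj
        rw [List.length_take] at this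
        omega
      have : (L.take t)[j] = L[j] := List.getElem_take ..
      rw [this, hLget j (by omega)] at hjq
      rw [← hjq]
      simp only [hrdef]
      omega
    have hpr : (p : ℕ) < (r : ℕ) := by simp [hrdef]; omega
    have hc : (((r : ℕ) : ℂ) - ((p : ℕ) : ℂ))⁻¹ = ((t : ℂ) + 1)⁻¹ := by
      have hrv : ((r : ℕ) : ℂ) = ((p : ℕ) : ℂ) + 1 + (t : ℂ) := by
        simp [hrdef]
        try push_cast
        try ring
      rw [hrv]
      ring_nf
    have htne : ((t : ℂ) + 1) ≠ 0 := by
      exact_mod_cast Nat.succ_ne_zero t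
    constructor
    · rw [htake, List.map_append, List.prod_append, List.map_singleton,
        List.prod_singleton, mul_assoc]
      have hexp : ((1 : MonoidAlgebra ℂ (Equiv.Perm (Fin n))) +
          (((r : ℕ) : ℂ) - ((p : ℕ) : ℂ))⁻¹ • δ (Equiv.swap p r)) * T n ((p : ℕ) + 1)
          = T n ((p : ℕ) + 1) + (((r : ℕ) : ℂ) - ((p : ℕ) : ℂ))⁻¹ •
              (δ (Equiv.swap p r) * T n ((p : ℕ) + 1)) := by
        rw [add_mul, one_mul, smul_mul_assoc]
      rw [hexp, mul_add, ih1, mul_smul_comm, aug p r hpr (L.take t) hmemtake, ih2, hc]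
      rw [smul_smul, inv_mul_cancel₀ htne, one_smul]
      have hfins : Finset.univ.filter
          (fun q : Fin n => (p : ℕ) ≤ (q : ℕ) ∧ (q : ℕ) < (p : ℕ) + 1 + (t + 1))
          = insert r (Finset.univ.filter
            (fun q : Fin n => (p : ℕ) ≤ (q : ℕ) ∧ (q : ℕ) < (p : ℕ) + 1 + t)) := by
        ext q
        simp only [Finset.mem_filter, Finset.mem_univ, true_and, Finset.mem_insert,
          Fin.ext_iff, hrdef]
        omega
      have hrnot : r ∉ Finset.univ.filter
          (fun q : Fin n => (p : ℕ) ≤ (q : ℕ) ∧ (q : ℕ) < (p : ℕ) + 1 + t) := by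
        simp [hrdef]
      rw [hfins, Finset.sum_insert hrnot, add_mul, add_comm]
    · rw [htake, List.map_append, List.prod_append, List.map_singleton,
        List.prod_singleton, ih2, hc]
      push_cast
      field_simp
      try ring

/-- The block lemma: the `p`-th block of the fusion product carries `T (p+1)` to `T p`. -/
lemma block {n : ℕ} (p : Fin n) :
    (((List.finRange n).filter (fun q => p < q)).map
        (fun (q : Fin n) => (1 : MonoidAlgebra ℂ (Equiv.Perm (Fin n))) +
          (((q : ℕ) : ℂ) - ((p : ℕ) : ℂ))⁻¹ • δ (Equiv.swap p q))).prod * T n ((p : ℕ) + 1)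
      = T n (p : ℕ) := by
  have hlen : ((List.finRange n).drop ((p : ℕ) + 1)).length = n - ((p : ℕ) + 1) := by
    rw [List.length_drop, List.length_finRange]
  have := (block_aux p (((List.finRange n).drop ((p : ℕ) + 1)).length) le_rfl).1
  rw [List.take_length] at this
  rw [finRange_filter_lt n p, this]
  have hfil : Finset.univ.filter
      (fun q : Fin n => (p : ℕ) ≤ (q : ℕ) ∧
        (q : ℕ) < (p : ℕ) + 1 + ((List.finRange n).drop ((p : ℕ) + 1)).length)
      = Finset.univ.filter (fun q : Fin n => (p : ℕ) ≤ (q : ℕ)) := by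
    ext q
    have := q.isLt
    have := p.isLt
    simp only [Finset.mem_filter, Finset.mem_univ, true_and, hlen]
    omega
  rw [hfil]
  have := T_coset (k := (p : ℕ)) (n := n) p.isLt
  have hp : (⟨(p : ℕ), p.isLt⟩ : Fin n) = p := rfl
  rw [hp] at this
  rw [← Finset.sum_mul] at this
  exact this.symm

lemma suffix_prod {n : ℕ} : ∀ (d k : ℕ), k + d = n →
    (((List.finRange n).drop k).map
        (fun p => (((List.finRange n).filter (fun q => p < q)).map
          (fun (q : Fin n) => (1 : MonoidAlgebra ℂ (Equiv.Perm (Fin n))) +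
            (((q : ℕ) : ℂ) - ((p : ℕ) : ℂ))⁻¹ • δ (Equiv.swap p q))).prod)).prod = T n k := by
  intro d
  induction d with
  | zero =>
    intro k hk
    subst hk
    simp only [Nat.add_zero]
    have hnil : (List.finRange k).drop k = [] :=
      List.drop_eq_nil_of_le (le_of_eq List.length_finRange)
    rw [hnil, List.map_nil, List.prod_nil, T_top]
  | succ d ih =>
    intro k hk
    have hkn : k < n := by omega
    have hklen : k < (List.finRange n).length := by rwa [List.length_finRange]
    rw [List.drop_eq_getElem_cons hklen, List.map_cons, List.prod_cons]
    have hget : (List.finRange n)[k] = ⟨k, hkn⟩ := by simp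
    rw [ih (k + 1) (by omega), hget]
    exact block (⟨k, hkn⟩ : Fin n)

end RowFusionAux

open RowFusionAux in
lemma rowFusion_eq_T_zero (n : ℕ) : rowFusion n = T n 0 := by
  unfold rowFusion lexPairs
  rw [List.map_flatMap]
  rw [List.flatMap_def, List.prod_flatten, List.map_map]
  have heq : ∀ p : Fin n,
      ((((List.finRange n).filter (fun q => p < q)).map (fun q => ((p : Fin n), q))).map
        (fun pq : Fin n × Fin n => (1 : MonoidAlgebra ℂ (Equiv.Perm (Fin n))) -
          (((pq.1 : ℕ) : ℂ) - ((pq.2 : ℕ) : ℂ))⁻¹ •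
            MonoidAlgebra.of ℂ (Equiv.Perm (Fin n)) (Equiv.swap pq.1 pq.2))).prod
      = (((List.finRange n).filter (fun q => p < q)).map
          (fun (q : Fin n) => (1 : MonoidAlgebra ℂ (Equiv.Perm (Fin n))) +
            (((q : ℕ) : ℂ) - ((p : ℕ) : ℂ))⁻¹ • δ (Equiv.swap p q))).prod := by
    intro p
    rw [List.map_map]
    congr 1
    apply List.map_congr_left
    intro q _
    show (1 : MonoidAlgebra ℂ (Equiv.Perm (Fin n))) -
        (((p : ℕ) : ℂ) - ((q : ℕ) : ℂ))⁻¹ • δ (Equiv.swap p q) = _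
    rw [sub_eq_add_neg, ← neg_smul, ← inv_neg, neg_sub]
  have := suffix_prod (n := n) n 0 (by omega)
  rw [List.drop_zero] at this
  refine Eq.trans ?_ this
  congr 1
  apply List.map_congr_left
  intro p _
  simpa [Function.comp] using heq p

/-- For the single-row shape `λ = (n)` with its unique (row) standard tableau,
the fusion product `F_Λ = ∏_{(p,q) lex} f_{pq}(c_p, c_q)` equals the normalized
row symmetrizer `P_Λ Q_Λ P_Λ / n!` (here `Q_Λ = 1`), which is the sum of all
permutations `Σ_{σ ∈ S_n} σ`. -/
theorem rowFusion_eq_symmetrizer (n : ℕ) :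
    rowFusion n = ((Nat.factorial n : ℂ))⁻¹ •
        ((∑ σ : Equiv.Perm (Fin n), MonoidAlgebra.of ℂ (Equiv.Perm (Fin n)) σ) *
          (1 : MonoidAlgebra ℂ (Equiv.Perm (Fin n))) *
          (∑ σ : Equiv.Perm (Fin n), MonoidAlgebra.of ℂ (Equiv.Perm (Fin n)) σ)) ∧
    rowFusion n = ∑ σ : Equiv.Perm (Fin n), MonoidAlgebra.of ℂ (Equiv.Perm (Fin n)) σ := by
  have h2 : rowFusion n = ∑ σ : Equiv.Perm (Fin n), MonoidAlgebra.of ℂ (Equiv.Perm (Fin n)) σ := by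
    rw [rowFusion_eq_T_zero, RowFusionAux.T_zero]
  refine ⟨?_, h2⟩
  rw [h2, mul_one]
  set S := ∑ σ : Equiv.Perm (Fin n), MonoidAlgebra.of ℂ (Equiv.Perm (Fin n)) σ with hS
  have hSS : S * S = (Nat.factorial n : ℂ) • S := by
    rw [hS, Finset.sum_mul]
    have : ∀ τ : Equiv.Perm (Fin n),
        MonoidAlgebra.of ℂ (Equiv.Perm (Fin n)) τ *
          (∑ σ : Equiv.Perm (Fin n), MonoidAlgebra.of ℂ (Equiv.Perm (Fin n)) σ) =
        ∑ σ : Equiv.Perm (Fin n), MonoidAlgebra.of ℂ (Equiv.Perm (Fin n)) σ := by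
      intro τ
      have := RowFusionAux.delta_mul_T (n := n) (k := 0) τ (fun i hi => by omega)
      rwa [RowFusionAux.T_zero] at this
    rw [Finset.sum_congr rfl (fun τ _ => this τ), Finset.sum_const, Finset.card_univ,
      Fintype.card_perm, Fintype.card_fin, ← Nat.cast_smul_eq_nsmul ℂ]
  rw [hSS, smul_smul, inv_mul_cancel₀ (by exact_mod_cast Nat.factorial_ne_zero n), one_smul]
end

section
/- Write F_Λ(z₁,...,z_n) = ∏_{(p,q) lex} f_{pq}(z_p + c_p(Λ), z_q + c_q(Λ)) in ℂ[S_n]. Multiplying this ordered product on the right by the longest element σ₀ ∈ S_n and expanding in the group basis, the coefficient of σ₀ is identically 1 as a rational function of z₁,...,z_n; consequently, whenever the limit F_Λ of F_Λ(z₁,...,z_n) on a subspace exists, the coefficient of the identity in F_Λ is 1. -/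
/-- The content `c_k(Λ) = j - i` of the entry `k` of a tableau encoded by the
bijection `e` (entry ↦ cell `(i, j)`), as a complex number. -/
noncomputable def tabContent {n : ℕ} {μ : YoungDiagram}
    (e : Fin n ≃ {c // c ∈ μ.cells}) (k : Fin n) : ℂ :=
  ((((e k : ℕ × ℕ)).2 : ℂ)) - ((((e k : ℕ × ℕ)).1 : ℂ))

/-- The fusion product
`F_Λ(z₁,…,z_n) = ∏_{(p,q) lex} f_{pq}(z_p + c_p(Λ), z_q + c_q(Λ))` in `ℂ[S_n]`,
the product over the pairs `(p,q)`, `p < q`, in lexicographic order, of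
`1 - (p q)/((z_p + c_p) - (z_q + c_q))`. -/
noncomputable def fusionProd (n : ℕ) {μ : YoungDiagram}
    (e : Fin n ≃ {c // c ∈ μ.cells}) (z : Fin n → ℂ) :
    MonoidAlgebra ℂ (Equiv.Perm (Fin n)) :=
  ((lexPairs n).map fun pq =>
    (1 : MonoidAlgebra ℂ (Equiv.Perm (Fin n))) -
      ((z pq.1 + tabContent e pq.1) - (z pq.2 + tabContent e pq.2))⁻¹ •
        MonoidAlgebra.of ℂ (Equiv.Perm (Fin n)) (Equiv.swap pq.1 pq.2)).prod

/-- Lexicographic strict order on pairs. -/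
def lexLT {n : ℕ} (a b : Fin n × Fin n) : Prop :=
  a.1 < b.1 ∨ (a.1 = b.1 ∧ a.2 < b.2)

lemma mem_lexPairs {n : ℕ} {pq : Fin n × Fin n} (h : pq ∈ lexPairs n) : pq.1 < pq.2 := by
  simp only [lexPairs, List.mem_flatMap, List.mem_map, List.mem_filter] at h
  obtain ⟨p, -, q, ⟨-, hq⟩, rfl⟩ := h
  simpa using hq

lemma pairwise_lexPairs (n : ℕ) : (lexPairs n).Pairwise lexLT := by
  rw [lexPairs, List.pairwise_flatMap]
  constructor
  · intro p _
    rw [List.pairwise_map]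
    exact ((List.pairwise_lt_finRange n).filter _).imp fun h => Or.inr ⟨rfl, h⟩
  · exact (List.pairwise_lt_finRange n).imp fun {p p'} h => by
      rintro x hx y hy
      simp only [List.mem_map, List.mem_filter] at hx hy
      obtain ⟨qx, -, rfl⟩ := hx
      obtain ⟨qy, -, rfl⟩ := hy
      exact Or.inl h

lemma prod_swap_fix {n : ℕ} (S : List (Fin n × Fin n)) (m : Fin n)
    (h : ∀ pq ∈ S, m < pq.1 ∧ m < pq.2) :
    ((S.map fun pq => Equiv.swap pq.1 pq.2).prod) m = m := by
  induction S with
  | nil => rfl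
  | cons a S ih =>
    have ha := h a (List.mem_cons_self)
    rw [List.map_cons, List.prod_cons, Equiv.Perm.mul_apply,
      ih fun pq hpq => h pq (List.mem_cons_of_mem a hpq),
      Equiv.swap_apply_of_ne_of_ne ha.1.ne ha.2.ne]

lemma prod_swap_head {n : ℕ} (m : Fin n) :
    ∀ (S : List (Fin n × Fin n)) (q : Fin n), m < q →
      (∀ pq ∈ S, pq.1 < pq.2) → (∀ pq ∈ S, lexLT (m, q) pq) → S.Pairwise lexLT →
      q ≤ ((((m, q) :: S).map fun pq => Equiv.swap pq.1 pq.2).prod) m := by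
  intro S
  induction S with
  | nil =>
    intro q hmq _ _ _
    simp [Equiv.swap_apply_left]
  | cons a S ih =>
    intro q hmq hlt hhead hpw
    obtain ⟨m₂, q₂⟩ := a
    rcases hhead _ List.mem_cons_self with h | ⟨rfl, hq⟩
    · -- m < m₂ : tail fixes m
      rw [List.map_cons, List.prod_cons, Equiv.Perm.mul_apply]
      rw [show ((((m₂, q₂) :: S).map fun pq => Equiv.swap pq.1 pq.2).prod) m = m from
        prod_swap_fix _ m ?_]
      · rw [Equiv.swap_apply_left]
      · rintro pq hpq
        rcases List.mem_cons.mp hpq with rfl | hpq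
        · exact ⟨h, h.trans (hlt _ List.mem_cons_self)⟩
        · have := (List.pairwise_cons.mp hpw).1 pq hpq
          rcases this with h2 | ⟨heq, -⟩
          · have h1 : m < pq.1 := h.trans h2
            exact ⟨h1, h1.trans (hlt pq (List.mem_cons_of_mem _ hpq))⟩
          · have h1 : m < pq.1 := heq ▸ h
            exact ⟨h1, h1.trans (hlt pq (List.mem_cons_of_mem _ hpq))⟩
    · -- m₂ = m, q < q₂
      have hmq₂ : m < q₂ := hmq.trans hq
      have h1 : ∀ pq ∈ S, pq.1 < pq.2 := fun pq hpq => hlt pq (List.mem_cons_of_mem _ hpq)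
      have h2 : ∀ pq ∈ S, lexLT (m, q₂) pq := fun pq hpq => (List.pairwise_cons.mp hpw).1 pq hpq
      have h3 := ih q₂ hmq₂ h1 h2 (List.pairwise_cons.mp hpw).2
      set v := ((((m, q₂) :: S).map fun pq => Equiv.swap pq.1 pq.2).prod) m with hv
      rw [List.map_cons, List.prod_cons, Equiv.Perm.mul_apply]
      rw [show ((((m, q₂) :: S).map fun pq => Equiv.swap pq.1 pq.2).prod) m = v from rfl]
      rw [Equiv.swap_apply_of_ne_of_ne (hmq.trans (hq.trans_le h3)).ne' (hq.trans_le h3).ne']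
      exact le_of_lt (hq.trans_le h3)

/-- A nonempty sublist of an all-`p<q`, lex-sorted list of pairs has a
product of swaps which is not the identity. -/
lemma prod_swap_ne_one {n : ℕ} (S : List (Fin n × Fin n)) (hS : S ≠ [])
    (hlt : ∀ pq ∈ S, pq.1 < pq.2) (hpw : S.Pairwise lexLT) :
    ((S.map fun pq => Equiv.swap pq.1 pq.2).prod) ≠ 1 := by
  obtain ⟨⟨m, q⟩, S, rfl⟩ := List.exists_cons_of_ne_nil hS
  have hmq : m < q := hlt _ List.mem_cons_self
  have := prod_swap_head m S q hmq
    (fun pq hpq => hlt pq (List.mem_cons_of_mem _ hpq))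
    (fun pq hpq => (List.pairwise_cons.mp hpw).1 pq hpq)
    (List.pairwise_cons.mp hpw).2
  intro hcontra
  rw [hcontra] at this
  exact absurd (hmq.trans_le this) (lt_irrefl m)

/-- expansion of a product of `1 + gᵢ` as sum over sublists. -/
lemma prod_one_add {R : Type*} [Ring R] {X : Type*} (L : List X) (g : X → R) :
    (L.map fun x => 1 + g x).prod = (L.sublists'.map fun S => (S.map g).prod).sum := by
  induction L with
  | nil => simp
  | cons a L ih =>
    rw [List.map_cons, List.prod_cons, ih, List.sublists'_cons, List.map_append, List.sum_append,
      add_mul, one_mul, List.map_map, ← List.sum_map_mul_left]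
    congr 2

lemma prod_smul_of {n : ℕ} (S : List (Fin n × Fin n)) (c : Fin n × Fin n → ℂ) :
    (S.map fun pq => c pq • MonoidAlgebra.of ℂ (Equiv.Perm (Fin n)) (Equiv.swap pq.1 pq.2)).prod
      = (S.map c).prod • MonoidAlgebra.of ℂ (Equiv.Perm (Fin n))
          ((S.map fun pq => Equiv.swap pq.1 pq.2).prod) := by
  induction S with
  | nil => simp [MonoidAlgebra.one_def]
  | cons a S ih =>
    simp only [List.map_cons, List.prod_cons, ih, smul_mul_smul_comm, map_mul]

lemma sum_sublists_indicator {X : Type*} (L : List X) (f : List X → ℂ)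
    (hf : ∀ S, S.Sublist L → S ≠ [] → f S = 0) (h0 : f [] = 1) :
    ((L.sublists'.map f).sum) = 1 := by
  induction L with
  | nil => simp [h0]
  | cons a L ih =>
    rw [List.sublists'_cons, List.map_append, List.sum_append, List.map_map]
    rw [ih fun S hS hne => hf S (hS.trans (List.sublist_cons_self a L)) hne]
    have : ∀ x ∈ (L.sublists'.map (f ∘ List.cons a)), x = 0 := by
      intro x hx
      simp only [List.mem_map, Function.comp] at hx
      obtain ⟨S, hS, rfl⟩ := hx
      exact hf (a :: S) ((List.mem_sublists'.mp hS).cons_cons a) (List.cons_ne_nil a S)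
    rw [List.sum_eq_zero this, add_zero]


/-- For a standard tableau `Λ` of shape `λ ⊢ n` and parameters `z` at which all
the factors are defined, multiplying `F_Λ(z₁,…,z_n)` on the right by the longest
element `σ₀ ∈ S_n` yields an element whose coefficient at `σ₀` is `1`;
consequently the coefficient of the identity in `F_Λ(z₁,…,z_n)` is `1`. -/
theorem fusionProd_coeff_longest_one (n : ℕ) (μ : YoungDiagram) (hμ : μ.card = n)
    (e : Fin n ≃ {c // c ∈ μ.cells})
    (hrow : ∀ j k : Fin n, ((e j : ℕ × ℕ)).1 = ((e k : ℕ × ℕ)).1 →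
      ((e j : ℕ × ℕ)).2 < ((e k : ℕ × ℕ)).2 → j < k)
    (hcol : ∀ j k : Fin n, ((e j : ℕ × ℕ)).2 = ((e k : ℕ × ℕ)).2 →
      ((e j : ℕ × ℕ)).1 < ((e k : ℕ × ℕ)).1 → j < k)
    (z : Fin n → ℂ)
    (hz : ∀ p q : Fin n, p ≠ q → z p + tabContent e p ≠ z q + tabContent e q) :
    ((fusionProd n e z * MonoidAlgebra.of ℂ (Equiv.Perm (Fin n)) Fin.revPerm).coeff
        Fin.revPerm = 1) ∧
    ((fusionProd n e z).coeff 1 = 1) := by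
  have key : (fusionProd n e z).coeff 1 = 1 := by
    classical
    set c : Fin n × Fin n → ℂ := fun pq =>
      -(((z pq.1 + tabContent e pq.1) - (z pq.2 + tabContent e pq.2))⁻¹) with hc
    set g : Fin n × Fin n → MonoidAlgebra ℂ (Equiv.Perm (Fin n)) := fun pq =>
      c pq • MonoidAlgebra.of ℂ (Equiv.Perm (Fin n)) (Equiv.swap pq.1 pq.2) with hg
    have hfp : fusionProd n e z = ((lexPairs n).map fun pq => 1 + g pq).prod := by
      unfold fusionProd
      congr 1
      apply List.map_congr_left
      intro pq _
      simp only [hg, hc, neg_smul, ← sub_eq_add_neg]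
    rw [hfp, prod_one_add]
    have := map_list_sum ((Finsupp.applyAddHom (1 : Equiv.Perm (Fin n))).comp
      (MonoidAlgebra.coeffAddEquiv (R := ℂ) (M := Equiv.Perm (Fin n))).toAddMonoidHom)
      (((lexPairs n).sublists'.map fun S => (S.map g).prod))
    rw [show ((((lexPairs n).sublists'.map fun S => (S.map g).prod).sum :
        MonoidAlgebra ℂ (Equiv.Perm (Fin n)))).coeff 1
        = (((Finsupp.applyAddHom (1 : Equiv.Perm (Fin n))).comp
      (MonoidAlgebra.coeffAddEquiv (R := ℂ) (M := Equiv.Perm (Fin n))).toAddMonoidHom)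
            (((lexPairs n).sublists'.map fun S => (S.map g).prod).sum)) from rfl, this,
      List.map_map]
    apply sum_sublists_indicator
    · intro S hS hne
      have hσ : ((S.map fun pq => Equiv.swap pq.1 pq.2).prod) ≠ 1 :=
        prod_swap_ne_one S hne (fun pq hpq => mem_lexPairs (hS.mem hpq))
          ((pairwise_lexPairs n).sublist hS)
      simp only [Function.comp_apply, hg, prod_smul_of, AddMonoidHom.coe_comp,
        Finsupp.applyAddHom_apply]
      change ((_ : ℂ) • MonoidAlgebra.of ℂ (Equiv.Perm (Fin n)) _).coeff 1 = 0
      rw [MonoidAlgebra.of_apply, MonoidAlgebra.coeff_smul_apply, MonoidAlgebra.coeff_single,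
        Finsupp.single_eq_of_ne hσ.symm, smul_zero]
    · simp [MonoidAlgebra.one_def]
  refine ⟨?_, key⟩
  rw [MonoidAlgebra.of_apply, MonoidAlgebra.coeff_mul_single_apply, mul_inv_cancel, mul_one]
  exact key
end

section
/- Let φ be the ℂ-linear antiautomorphism of ℂ[S_n] with φ(σ) = σ⁻¹ for σ ∈ S_n. Then for any standard tableau Λ, every value of the ordered product F_Λ(z₁,...,z_n) = ∏_{(p,q) lex} f_{pq}(z_p + c_p(Λ), z_q + c_q(Λ)) at a point where it is defined is φ-invariant; i.e., applying φ to the product and restoring the lexicographic order via the Yang–Baxter relations yields the same element. -/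
open Equiv MonoidAlgebra

/-! ### Auxiliary: generic reordering machinery for Yang–Baxter type systems -/

section Reorder

variable {ι : Type*} {M : Type*} [Monoid M] (h : ι → ι → M)

/-- The product `h p q₁ * ⋯ * h p q_k` along a row. -/
def rowProd (p : ι) (Q : List ι) : M := (Q.map (h p)).prod

/-- The product along a row, in reverse order. -/
def revRowProd (p : ι) (Q : List ι) : M := ((Q.map (h p)).reverse).prod

/-- The product over all pairs in lexicographic order. -/
def lexProd : List ι → M
  | [] => 1
  | x :: Q => rowProd h x Q * lexProd Q

/-- The product over all pairs in reversed lexicographic order. -/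
def revLexProd : List ι → M
  | [] => 1
  | x :: Q => revLexProd Q * revRowProd h x Q

/-- The list of pairs drawn from a list, in lexicographic order. -/
def lexProdList : List ι → List (ι × ι)
  | [] => []
  | x :: Q => (Q.map fun q => (x, q)) ++ lexProdList Q

lemma rowProd_cons (p x : ι) (t : List ι) :
    rowProd h p (x :: t) = h p x * rowProd h p t := by
  simp [rowProd]

lemma revRowProd_cons (p x : ι) (t : List ι) :
    revRowProd h p (x :: t) = revRowProd h p t * h p x := by
  simp [revRowProd]

variable (hcomm : ∀ a b c d : ι, a ≠ c → a ≠ d → b ≠ c → b ≠ d →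
    Commute (h a b) (h c d))
variable (hybe : ∀ a b c : ι, a ≠ b → a ≠ c → b ≠ c →
    h a b * h a c * h b c = h b c * h a c * h a b)

include hcomm in
lemma commute_rowProd {a b p : ι} {Q : List ι} (hap : a ≠ p) (hbp : b ≠ p)
    (haQ : a ∉ Q) (hbQ : b ∉ Q) : Commute (h a b) (rowProd h p Q) := by
  induction Q with
  | nil => simp only [rowProd, List.map_nil, List.prod_nil]; exact Commute.one_right _
  | cons x t ih =>
    rw [rowProd_cons]
    exact (hcomm a b p x hap (fun e => haQ (e ▸ List.mem_cons_self (a := x) (l := t)))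
      hbp (fun e => hbQ (e ▸ List.mem_cons_self (a := x) (l := t)))).mul_right
      (ih (fun e => haQ (List.mem_cons_of_mem x e))
        (fun e => hbQ (List.mem_cons_of_mem x e)))

include hcomm in
lemma commute_lexProd {a b : ι} {Q : List ι} (haQ : a ∉ Q) (hbQ : b ∉ Q) :
    Commute (h a b) (lexProd h Q) := by
  induction Q with
  | nil => exact Commute.one_right _
  | cons x t ih =>
    have hax : a ≠ x := fun e => haQ (e ▸ List.mem_cons_self (a := x) (l := t))
    have hbx : b ≠ x := fun e => hbQ (e ▸ List.mem_cons_self (a := x) (l := t))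
    have hat : a ∉ t := fun e => haQ (List.mem_cons_of_mem x e)
    have hbt : b ∉ t := fun e => hbQ (List.mem_cons_of_mem x e)
    rw [lexProd]
    exact (commute_rowProd h hcomm hax hbx hat hbt).mul_right (ih hat hbt)

include hcomm hybe in
/-- The basic shuffle lemma, proved by iterating the Yang–Baxter relation. -/
lemma shuffle {p a : ι} (hpa : p ≠ a) : ∀ {Q : List ι}, Q.Nodup → p ∉ Q → a ∉ Q →
    h p a * rowProd h p Q * rowProd h a Q = rowProd h a Q * rowProd h p Q * h p a := by
  intro Q
  induction Q with
  | nil => simp [rowProd]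
  | cons x t ih =>
    intro hnd hpQ haQ
    have hpx : p ≠ x := fun e => hpQ (e ▸ List.mem_cons_self (a := x) (l := t))
    have hax : a ≠ x := fun e => haQ (e ▸ List.mem_cons_self (a := x) (l := t))
    have hpt : p ∉ t := fun e => hpQ (List.mem_cons_of_mem x e)
    have hat : a ∉ t := fun e => haQ (List.mem_cons_of_mem x e)
    have hxt : x ∉ t := (List.nodup_cons.mp hnd).1
    have hnt : t.Nodup := (List.nodup_cons.mp hnd).2
    have c1 : Commute (h a x) (rowProd h p t) :=
      commute_rowProd h hcomm (Ne.symm hpa) hpx.symm hat hxt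
    have c2 : Commute (h p x) (rowProd h a t) :=
      commute_rowProd h hcomm hpa hax.symm hpt hxt
    have ybe1 : h p a * h p x * h a x = h a x * h p x * h p a :=
      hybe p a x hpa hpx hax
    have IH := ih hnt hpt hat
    rw [rowProd_cons, rowProd_cons]
    calc h p a * (h p x * rowProd h p t) * (h a x * rowProd h a t)
        = h p a * h p x * (rowProd h p t * h a x) * rowProd h a t := by
          simp [mul_assoc]
      _ = h p a * h p x * (h a x * rowProd h p t) * rowProd h a t := by
          rw [c1.eq]
      _ = (h p a * h p x * h a x) * (rowProd h p t * rowProd h a t) := by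
          simp [mul_assoc]
      _ = (h a x * h p x * h p a) * (rowProd h p t * rowProd h a t) := by
          rw [ybe1]
      _ = h a x * h p x * (h p a * rowProd h p t * rowProd h a t) := by
          simp [mul_assoc]
      _ = h a x * h p x * (rowProd h a t * rowProd h p t * h p a) := by
          rw [IH]
      _ = h a x * (h p x * rowProd h a t) * (rowProd h p t * h p a) := by
          simp [mul_assoc]
      _ = h a x * (rowProd h a t * h p x) * (rowProd h p t * h p a) := by
          rw [c2.eq]
      _ = (h a x * rowProd h a t) * (h p x * rowProd h p t) * h p a := by
          simp [mul_assoc]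

include hcomm hybe in
/-- A row can be moved through the lexicographic product, reversing it. -/
lemma train {p : ι} : ∀ {Q : List ι}, Q.Nodup → p ∉ Q →
    rowProd h p Q * lexProd h Q = lexProd h Q * revRowProd h p Q := by
  intro Q
  induction Q with
  | nil => simp [rowProd, lexProd, revRowProd]
  | cons x t ih =>
    intro hnd hpQ
    have hpx : p ≠ x := fun e => hpQ (e ▸ List.mem_cons_self (a := x) (l := t))
    have hpt : p ∉ t := fun e => hpQ (List.mem_cons_of_mem x e)
    have hxt : x ∉ t := (List.nodup_cons.mp hnd).1
    have hnt : t.Nodup := (List.nodup_cons.mp hnd).2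
    have hshuf := shuffle h hcomm hybe hpx hnt hpt hxt
    have hcl : Commute (h p x) (lexProd h t) := commute_lexProd h hcomm hpt hxt
    rw [rowProd_cons, lexProd, revRowProd_cons]
    calc h p x * rowProd h p t * (rowProd h x t * lexProd h t)
        = (h p x * rowProd h p t * rowProd h x t) * lexProd h t := by
          simp [mul_assoc]
      _ = (rowProd h x t * rowProd h p t * h p x) * lexProd h t := by
          rw [hshuf]
      _ = rowProd h x t * rowProd h p t * (h p x * lexProd h t) := by
          simp [mul_assoc]
      _ = rowProd h x t * rowProd h p t * (lexProd h t * h p x) := by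
          rw [hcl.eq]
      _ = rowProd h x t * (rowProd h p t * lexProd h t) * h p x := by
          simp [mul_assoc]
      _ = rowProd h x t * (lexProd h t * revRowProd h p t) * h p x := by
          rw [ih hnt hpt]
      _ = rowProd h x t * lexProd h t * (revRowProd h p t * h p x) := by
          simp [mul_assoc]

include hcomm hybe in
/-- The lexicographic product equals the reversed lexicographic product. -/
lemma lexProd_eq_revLexProd : ∀ {Q : List ι}, Q.Nodup → lexProd h Q = revLexProd h Q := by
  intro Q
  induction Q with
  | nil => intro _; rfl
  | cons x t ih =>
    intro hnd
    have hxt : x ∉ t := (List.nodup_cons.mp hnd).1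
    have hnt : t.Nodup := (List.nodup_cons.mp hnd).2
    rw [lexProd, revLexProd, train h hcomm hybe hnt hxt, ih hnt]

lemma map_lexProdList_prod : ∀ (Q : List ι),
    ((lexProdList Q).map (fun pq : ι × ι => h pq.1 pq.2)).prod = lexProd h Q := by
  intro Q
  induction Q with
  | nil => rfl
  | cons x t ih =>
    rw [lexProdList, lexProd, List.map_append, List.prod_append, ← ih]
    congr 1
    rw [rowProd, List.map_map]
    rfl

lemma map_lexProdList_reverse_prod : ∀ (Q : List ι),
    (((lexProdList Q).map (fun pq : ι × ι => h pq.1 pq.2)).reverse).prod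
      = revLexProd h Q := by
  intro Q
  induction Q with
  | nil => rfl
  | cons x t ih =>
    rw [lexProdList, revLexProd, List.map_append, List.reverse_append,
      List.prod_append, ← ih]
    congr 1
    rw [revRowProd, List.map_map]
    rfl

end Reorder

/-! ### Swap identities -/

section SwapIds
variable {ι : Type*} [DecidableEq ι] (a b c : ι)
variable (hab : a ≠ b) (hac : a ≠ c) (hbc : b ≠ c)

include hab hac hbc

lemma swap_e1 : swap a b * swap b c = swap a c * swap a b := by
  ext x; simp only [Equiv.Perm.mul_apply, Equiv.swap_apply_def]; split_ifs <;> simp_all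

lemma swap_e2 : swap b c * swap a b = swap a b * swap a c := by
  ext x; simp only [Equiv.Perm.mul_apply, Equiv.swap_apply_def]; split_ifs <;> simp_all

lemma swap_e3 : swap a c * swap b c = swap a b * swap a c := by
  ext x; simp only [Equiv.Perm.mul_apply, Equiv.swap_apply_def]; split_ifs <;> simp_all

lemma swap_e4 : swap b c * swap a c = swap a c * swap a b := by
  ext x; simp only [Equiv.Perm.mul_apply, Equiv.swap_apply_def]; split_ifs <;> simp_all

lemma swap_e5 : swap a b * swap a c * swap b c = swap a c := by
  ext x; simp only [Equiv.Perm.mul_apply, Equiv.swap_apply_def]; split_ifs <;> simp_all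

omit hab hac hbc in
lemma swap_e6 : swap a c * swap a b * swap a b = swap a c := by
  rw [mul_assoc, Equiv.swap_mul_self, mul_one]

end SwapIds

lemma swap_disjoint_commute {ι : Type*} [DecidableEq ι] {a b c d : ι}
    (hac : a ≠ c) (had : a ≠ d) (hbc : b ≠ c) (hbd : b ≠ d) :
    Commute (swap a b) (swap c d) := by
  apply Equiv.Perm.Disjoint.commute
  intro x
  by_cases hxa : x = a
  · subst hxa; right; exact Equiv.swap_apply_of_ne_of_ne hac had
  by_cases hxb : x = b
  · subst hxb; right; exact Equiv.swap_apply_of_ne_of_ne hbc hbd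
  · left; exact Equiv.swap_apply_of_ne_of_ne hxa hxb

/-! ### The abstract Yang–Baxter computation -/

lemma abstract_ybe {A : Type*} [Ring A] [Algebra ℂ A] (α β γ : ℂ) (a b c p q : A)
    (hab : a * b = p) (hba : b * a = q) (hac : a * c = q) (hca : c * a = p)
    (hbc : b * c = p) (hcb : c * b = q) (hpc : p * c = b) (hqa : q * a = b)
    (key : α * γ = α * β + β * γ) :
    (1 - α • a) * (1 - β • b) * (1 - γ • c) = (1 - γ • c) * (1 - β • b) * (1 - α • a) := by
  have expand : ∀ (x y z xy yz xz xyz : A) (u v w : ℂ), x * y = xy → y * z = yz →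
      x * z = xz → xy * z = xyz →
      (1 - u • x) * (1 - v • y) * (1 - w • z) =
        1 - u • x - v • y - w • z + (u*v) • xy + (v*w) • yz + (u*w) • xz
          - (u*v*w) • xyz := by
    intro x y z xy yz xz xyz u v w h1 h2 h3 h4
    simp only [sub_mul, mul_sub, one_mul, mul_one, smul_mul_assoc, mul_smul_comm,
      smul_smul, h1, h2, h3, h4]
    abel_nf
    module
  rw [expand a b c p p q b α β γ hab hbc hac (by rw [hpc]),
      expand c b a q q p b γ β α hcb hba hca (by rw [hqa])]
  match_scalars <;>
    first
      | ring1
      | linear_combination key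
      | linear_combination -key

lemma lexPairs_eq_aux {n : ℕ} : ∀ (m : List (Fin n)), m.Pairwise (· < ·) →
    (m.flatMap fun p => (m.filter fun q => p < q).map fun q => (p, q)) = lexProdList m := by
  intro m
  induction m with
  | nil => intro _; rfl
  | cons x t ih =>
    intro hp
    have hx : ∀ q ∈ t, x < q := (List.pairwise_cons.mp hp).1
    have ht : t.Pairwise (· < ·) := (List.pairwise_cons.mp hp).2
    rw [List.flatMap_cons, lexProdList]
    congr 1
    · have h1 : (x :: t).filter (fun q => x < q) = t.filter (fun q => x < q) := by
        rw [List.filter_cons]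
        simp [lt_irrefl]
      have h2 : t.filter (fun q => x < q) = t :=
        List.filter_eq_self.mpr (fun q hq => by simpa using hx q hq)
      rw [h1, h2]
    · rw [← ih ht]
      apply List.flatMap_congr
      intro p hpmem
      have hxp : ¬ p < x := not_lt.mpr (le_of_lt (hx p hpmem))
      rw [List.filter_cons]
      simp [hxp]

lemma lexPairs_eq (n : ℕ) : lexPairs n = lexProdList (List.finRange n) :=
  lexPairs_eq_aux _ (List.pairwise_lt_finRange n)

/-- The `ℂ`-linear involutive map `φ` of `ℂ[S_n]` induced by `σ ↦ σ⁻¹`. -/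
noncomputable def permInvol (n : ℕ) :
    MonoidAlgebra ℂ (Equiv.Perm (Fin n)) → MonoidAlgebra ℂ (Equiv.Perm (Fin n)) :=
  fun x => MonoidAlgebra.ofCoeff (Finsupp.equivMapDomain (Equiv.inv (Equiv.Perm (Fin n))) x.coeff)

/-! ### Properties of `permInvol` -/

section PermInvol
variable {n : ℕ}

lemma permInvol_apply (x : MonoidAlgebra ℂ (Equiv.Perm (Fin n))) (σ : Equiv.Perm (Fin n)) :
    (permInvol n x).coeff σ = x.coeff σ⁻¹ := by
  simp [permInvol, Finsupp.equivMapDomain_apply, Equiv.inv]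

lemma permInvol_single (σ : Equiv.Perm (Fin n)) (c : ℂ) :
    permInvol n (MonoidAlgebra.single σ c) = MonoidAlgebra.single σ⁻¹ c := by
  unfold permInvol
  rw [MonoidAlgebra.coeff_single, Finsupp.equivMapDomain_single]
  rfl

lemma permInvol_add (x y : MonoidAlgebra ℂ (Equiv.Perm (Fin n))) :
    permInvol n (x + y) = permInvol n x + permInvol n y := by
  ext σ
  rw [permInvol_apply]
  show x.coeff σ⁻¹ + y.coeff σ⁻¹ = (permInvol n x).coeff σ + (permInvol n y).coeff σ
  rw [permInvol_apply, permInvol_apply]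

lemma permInvol_sub (x y : MonoidAlgebra ℂ (Equiv.Perm (Fin n))) :
    permInvol n (x - y) = permInvol n x - permInvol n y := by
  ext σ
  rw [permInvol_apply]
  show x.coeff σ⁻¹ - y.coeff σ⁻¹ = (permInvol n x).coeff σ - (permInvol n y).coeff σ
  rw [permInvol_apply, permInvol_apply]

lemma permInvol_smul (c : ℂ) (x : MonoidAlgebra ℂ (Equiv.Perm (Fin n))) :
    permInvol n (c • x) = c • permInvol n x := by
  ext σ
  rw [permInvol_apply]
  show c * x.coeff σ⁻¹ = c * (permInvol n x).coeff σ
  rw [permInvol_apply]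

lemma permInvol_one : permInvol n 1 = 1 := by
  have : (1 : MonoidAlgebra ℂ (Equiv.Perm (Fin n))) = MonoidAlgebra.single 1 1 := rfl
  rw [this, permInvol_single, inv_one]

lemma permInvol_of (σ : Equiv.Perm (Fin n)) :
    permInvol n (MonoidAlgebra.of ℂ (Equiv.Perm (Fin n)) σ) =
      MonoidAlgebra.of ℂ (Equiv.Perm (Fin n)) σ⁻¹ := by
  rw [MonoidAlgebra.of_apply, MonoidAlgebra.of_apply]
  exact permInvol_single σ 1

lemma permInvol_mul (x y : MonoidAlgebra ℂ (Equiv.Perm (Fin n))) :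
    permInvol n (x * y) = permInvol n y * permInvol n x := by
  induction x using MonoidAlgebra.induction_linear with
  | zero => simp [permInvol]
  | add a b ha hb => rw [add_mul, permInvol_add, ha, hb, permInvol_add, mul_add]
  | single σ c =>
    induction y using MonoidAlgebra.induction_linear with
    | zero => simp [permInvol]
    | add a b ha hb => rw [mul_add, permInvol_add, ha, hb, permInvol_add, add_mul]
    | single τ d =>
      rw [MonoidAlgebra.single_mul_single, permInvol_single, permInvol_single,
        permInvol_single, MonoidAlgebra.single_mul_single, mul_inv_rev, mul_comm d c]

lemma permInvol_list_prod (l : List (MonoidAlgebra ℂ (Equiv.Perm (Fin n)))) :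
    permInvol n l.prod = (l.reverse.map (permInvol n)).prod := by
  induction l with
  | nil => simpa using permInvol_one
  | cons x t ih =>
    rw [List.prod_cons, permInvol_mul, ih, List.reverse_cons, List.map_append,
      List.prod_append]
    simp

end PermInvol

/-- Let `φ` be the `ℂ`-linear antiautomorphism of `ℂ[S_n]` with `φ(σ) = σ⁻¹`.
Then, for a standard tableau `Λ` and any parameters `z` at which the product is
defined, the value of `F_Λ(z₁,…,z_n)` is `φ`-invariant. -/
theorem fusionProd_phi_invariant (n : ℕ) (μ : YoungDiagram) (hμ : μ.card = n)
    (e : Fin n ≃ {c // c ∈ μ.cells})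
    (hrow : ∀ j k : Fin n, ((e j : ℕ × ℕ)).1 = ((e k : ℕ × ℕ)).1 →
      ((e j : ℕ × ℕ)).2 < ((e k : ℕ × ℕ)).2 → j < k)
    (hcol : ∀ j k : Fin n, ((e j : ℕ × ℕ)).2 = ((e k : ℕ × ℕ)).2 →
      ((e j : ℕ × ℕ)).1 < ((e k : ℕ × ℕ)).1 → j < k)
    (z : Fin n → ℂ)
    (hz : ∀ p q : Fin n, p ≠ q → z p + tabContent e p ≠ z q + tabContent e q) :
    (∀ x y : MonoidAlgebra ℂ (Equiv.Perm (Fin n)),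
      permInvol n (x * y) = permInvol n y * permInvol n x) ∧
    (∀ σ : Equiv.Perm (Fin n),
      permInvol n (MonoidAlgebra.of ℂ (Equiv.Perm (Fin n)) σ) =
        MonoidAlgebra.of ℂ (Equiv.Perm (Fin n)) σ⁻¹) ∧
    permInvol n (fusionProd n e z) = fusionProd n e z := by
  refine ⟨permInvol_mul, permInvol_of, ?_⟩
  -- set up the factor system
  set u : Fin n → ℂ := fun p => z p + tabContent e p with hu
  set h : Fin n → Fin n → MonoidAlgebra ℂ (Equiv.Perm (Fin n)) := fun p q =>
    (1 : MonoidAlgebra ℂ (Equiv.Perm (Fin n))) -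
      (u p - u q)⁻¹ • MonoidAlgebra.of ℂ (Equiv.Perm (Fin n)) (Equiv.swap p q) with hh
  have husub : ∀ p q : Fin n, p ≠ q → u p - u q ≠ 0 := fun p q hpq =>
    sub_ne_zero.mpr (hz p q hpq)
  -- commutation for disjoint pairs
  have hcomm : ∀ a b c d : Fin n, a ≠ c → a ≠ d → b ≠ c → b ≠ d →
      Commute (h a b) (h c d) := by
    intro a b c d hac had hbc hbd
    have h1 : Commute (MonoidAlgebra.of ℂ (Equiv.Perm (Fin n)) (Equiv.swap a b))
        (MonoidAlgebra.of ℂ (Equiv.Perm (Fin n)) (Equiv.swap c d)) :=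
      (swap_disjoint_commute hac had hbc hbd).map _
    have h2 : Commute ((u a - u b)⁻¹ • MonoidAlgebra.of ℂ (Equiv.Perm (Fin n)) (Equiv.swap a b))
        ((u c - u d)⁻¹ • MonoidAlgebra.of ℂ (Equiv.Perm (Fin n)) (Equiv.swap c d)) :=
      (h1.smul_left _).smul_right _
    simp only [hh]
    exact (Commute.one_left _).sub_left ((Commute.one_right _).sub_right h2)
  -- the Yang-Baxter relation
  have hybe : ∀ a b c : Fin n, a ≠ b → a ≠ c → b ≠ c →
      h a b * h a c * h b c = h b c * h a c * h a b := by
    intro a b c hab hac hbc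
    have d1 := husub a b hab
    have d2 := husub a c hac
    have d3 := husub b c hbc
    have key : (u a - u b)⁻¹ * (u b - u c)⁻¹ =
        (u a - u b)⁻¹ * (u a - u c)⁻¹ + (u a - u c)⁻¹ * (u b - u c)⁻¹ := by
      field_simp
      ring
    simp only [hh]
    exact abstract_ybe _ _ _ _ _ _
      (MonoidAlgebra.of ℂ (Equiv.Perm (Fin n)) (Equiv.swap a b * Equiv.swap a c))
      (MonoidAlgebra.of ℂ (Equiv.Perm (Fin n)) (Equiv.swap a c * Equiv.swap a b))
      (map_mul _ _ _).symm
      (map_mul _ _ _).symm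
      (by rw [← map_mul, swap_e1 a b c hab hac hbc])
      (by rw [← map_mul, swap_e2 a b c hab hac hbc])
      (by rw [← map_mul, swap_e3 a b c hab hac hbc])
      (by rw [← map_mul, swap_e4 a b c hab hac hbc])
      (by rw [← map_mul, swap_e5 a b c hab hac hbc])
      (by rw [← map_mul, mul_assoc, Equiv.swap_mul_self, mul_one])
      key
  -- identify the fusion product with the lexicographic product
  have hnodup := List.nodup_finRange n
  have hF : fusionProd n e z =
      ((lexProdList (List.finRange n)).map (fun pq : Fin n × Fin n => h pq.1 pq.2)).prod := by
    rw [fusionProd, lexPairs_eq]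
  -- each factor is fixed by permInvol
  have hfix : ∀ pq : Fin n × Fin n, permInvol n (h pq.1 pq.2) = h pq.1 pq.2 := by
    intro pq
    simp only [hh]
    rw [permInvol_sub, permInvol_one, permInvol_smul, permInvol_of, Equiv.swap_inv]
  -- conclude
  rw [hF, permInvol_list_prod]
  have hid : (((lexProdList (List.finRange n)).map
        (fun pq : Fin n × Fin n => h pq.1 pq.2)).reverse).map (permInvol n) =
      ((lexProdList (List.finRange n)).map (fun pq : Fin n × Fin n => h pq.1 pq.2)).reverse := by
    have : ∀ x ∈ (((lexProdList (List.finRange n)).map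
        (fun pq : Fin n × Fin n => h pq.1 pq.2)).reverse), permInvol n x = x := by
      intro x hx
      rw [List.mem_reverse, List.mem_map] at hx
      obtain ⟨pq, _, rfl⟩ := hx
      exact hfix pq
    rw [List.map_congr_left this]
    exact List.map_id' _
  rw [hid, map_lexProdList_reverse_prod,
    ← lexProd_eq_revLexProd h hcomm hybe hnodup, ← map_lexProdList_prod]
end
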